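/- arXiv:2503.14794 — 5 statements merged into one kernel-verified Lean document; each statement's English description precedes it below -/
import Mathlib

section
/- Let k be a field and let C be a k-linear triangulated category all of whose morphism spaces Hom_C(X, Y) are finite-dimensional over k. Let (A_n → B_n → C_n → A_n[1])_{n ≥ 1} be an inverse system of distinguished triangles in C. If the inverse systems (A_n) and (C_n) are constant as pro-objects, then the inverse system (B_n) is constant as a pro-object. -/
open CategoryTheory CategoryTheory.Limits CategoryTheory.Pretriangulated

universe v u w

/-- The composite transition map `X (n + k) ⟶ X n` of an inverse system
`(X, t : ∀ n, X (n+1) ⟶ X n)`. -/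
def transComp {C : Type u} [Category.{v} C] (X : ℕ → C) (t : ∀ n, X (n + 1) ⟶ X n)
    (n : ℕ) : ∀ k : ℕ, X (n + k) ⟶ X n
  | 0 => 𝟙 (X n)
  | k + 1 => t (n + k) ≫ transComp X t n k

/-- An inverse system `(X, t)` in a category `C` is *constant as a pro-object* if there
are an object `L` and compatible morphisms `e n : L ⟶ X n` such that for every object `D`
the canonical map `colim_n Hom(X n, D) → Hom(L, D)` is bijective, i.e.: every morphism
`L ⟶ D` factors through some `e n`, and any two morphisms `X n ⟶ D` equalized by `e n`
become equal after composing with some composite transition map `X (n + k) ⟶ X n`. -/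
def IsConstantPro {C : Type u} [Category.{v} C] (X : ℕ → C) (t : ∀ n, X (n + 1) ⟶ X n) :
    Prop :=
  ∃ (L : C) (e : ∀ n, L ⟶ X n),
    (∀ n, e (n + 1) ≫ t n = e n) ∧
    (∀ (D : C) (ψ : L ⟶ D), ∃ (n : ℕ) (φ : X n ⟶ D), e n ≫ φ = ψ) ∧
    (∀ (D : C) (n : ℕ) (φ φ' : X n ⟶ D),
      e n ≫ φ = e n ≫ φ' → ∃ k : ℕ, transComp X t n k ≫ φ = transComp X t n k ≫ φ')

section Infra

variable {C : Type u} [Category.{v} C] {D' : Type u} [Category.{v} D']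
variable (X : ℕ → C) (t : ∀ n, X (n + 1) ⟶ X n)

lemma transComp_map (F : C ⥤ D') (n k : ℕ) :
    F.map (transComp X t n k) =
      transComp (fun i => F.obj (X i)) (fun i => F.map (t i)) n k := by
  induction k with
  | zero => simp [transComp]
  | succ k ih => simp [transComp, ih]

lemma transComp_e {L : C} (e : ∀ n, L ⟶ X n) (he : ∀ n, e (n + 1) ≫ t n = e n)
    (n k : ℕ) : e (n + k) ≫ transComp X t n k = e n := by
  induction k with
  | zero => simp [transComp]
  | succ k ih =>
      show e (n + k + 1) ≫ (t (n + k) ≫ transComp X t n k) = e n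
      rw [← Category.assoc, he (n + k), ih]

lemma transComp_sq {Y : ℕ → C} {tY : ∀ n, Y (n + 1) ⟶ Y n}
    (φ : ∀ n, X n ⟶ Y n) (sq : ∀ n, φ (n + 1) ≫ tY n = t n ≫ φ n) (n k : ℕ) :
    φ (n + k) ≫ transComp Y tY n k = transComp X t n k ≫ φ n := by
  induction k with
  | zero => simp [transComp]
  | succ k ih =>
      show φ (n + k + 1) ≫ (tY (n + k) ≫ transComp Y tY n k) =
        (t (n + k) ≫ transComp X t n k) ≫ φ n
      rw [← Category.assoc, sq (n + k), Category.assoc, Category.assoc, ih]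

lemma t_eqToHom {m m' : ℕ} (hm : m = m') :
    t m ≫ eqToHom (congrArg X hm) =
      eqToHom (congrArg (fun i => X (i + 1)) hm) ≫ t m' := by
  subst hm; simp

lemma transComp_comp (n k₁ k₂ : ℕ) :
    transComp X t (n + k₁) k₂ ≫ transComp X t n k₁ =
      eqToHom (congrArg X (Nat.add_assoc n k₁ k₂)) ≫ transComp X t n (k₁ + k₂) := by
  induction k₂ with
  | zero => simp [transComp]
  | succ k₂ ih =>
      show (t (n + k₁ + k₂) ≫ transComp X t (n + k₁) k₂) ≫ transComp X t n k₁ =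
        eqToHom _ ≫ t (n + (k₁ + k₂)) ≫ transComp X t n (k₁ + k₂)
      rw [Category.assoc, ih, ← Category.assoc, t_eqToHom X t (Nat.add_assoc n k₁ k₂),
        Category.assoc]

/-- transition map along an equality `m = n + k`. -/
def trE {m n k : ℕ} (h : m = n + k) : X m ⟶ X n :=
  eqToHom (congrArg X h) ≫ transComp X t n k

lemma trE_rfl (n k : ℕ) : trE X t (rfl : n + k = n + k) = transComp X t n k := by
  simp [trE]

lemma trE_congr {m n k k' : ℕ} (h : m = n + k) (h' : m = n + k') :
    trE X t h = trE X t h' := by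
  obtain rfl : k = k' := by omega
  rfl

lemma trE_comp {m p n k₁ k₂ k₃ : ℕ} (h₁ : m = p + k₁) (h₂ : p = n + k₂)
    (h₃ : m = n + k₃) : trE X t h₁ ≫ trE X t h₂ = trE X t h₃ := by
  subst h₂; subst h₁
  obtain rfl : k₃ = k₂ + k₁ := by omega
  show (eqToHom _ ≫ transComp X t (n + k₂) k₁) ≫ eqToHom _ ≫ transComp X t n k₂ =
    eqToHom _ ≫ transComp X t n (k₂ + k₁)
  simp only [eqToHom_refl, Category.id_comp]
  rw [transComp_comp]

/-- transition map along an inequality `n ≤ m`. -/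
def trH (m n : ℕ) (h : n ≤ m) : X m ⟶ X n :=
  trE X t (show m = n + (m - n) by omega)

lemma transComp_toTrH (n k : ℕ) :
    transComp X t n k = trH X t (n + k) n (Nat.le_add_right n k) := by
  rw [trH, trE_congr X t _ (rfl : n + k = n + k), trE_rfl]

lemma trH_refl (n : ℕ) : trH X t n n le_rfl = 𝟙 (X n) := by
  rw [trH, trE_congr X t _ (show n = n + 0 by omega)]
  simp [trE, transComp]

lemma trH_succ (n : ℕ) : trH X t (n + 1) n (Nat.le_succ n) = t n := by
  rw [trH, trE_congr X t _ (show n + 1 = n + 1 by omega), trE_rfl]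
  show t (n + 0) ≫ 𝟙 _ = t n
  simp

lemma trH_comp {m p n : ℕ} (h₁ : p ≤ m) (h₂ : n ≤ p) :
    trH X t m p h₁ ≫ trH X t p n h₂ = trH X t m n (h₂.trans h₁) :=
  trE_comp X t _ _ _

lemma trH_e {L : C} (e : ∀ n, L ⟶ X n) (he : ∀ n, e (n + 1) ≫ t n = e n)
    {m n : ℕ} (h : n ≤ m) : e m ≫ trH X t m n h = e n := by
  rw [trH, trE]
  obtain ⟨k, hk⟩ : ∃ k, m = n + k := ⟨m - n, by omega⟩
  subst hk
  simp [transComp_e X t e he]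

lemma trH_sq {Y : ℕ → C} {tY : ∀ n, Y (n + 1) ⟶ Y n}
    (φ : ∀ n, X n ⟶ Y n) (sq : ∀ n, φ (n + 1) ≫ tY n = t n ≫ φ n)
    {m n : ℕ} (h : n ≤ m) :
    φ m ≫ trH Y tY m n h = trH X t m n h ≫ φ n := by
  rw [trH, trH, trE, trE]
  obtain ⟨k, hk⟩ : ∃ k, m = n + k := ⟨m - n, by omega⟩
  subst hk
  simp [transComp_sq X t φ sq]

lemma trH_map (F : C ⥤ D') {m n : ℕ} (h : n ≤ m) :
    F.map (trH X t m n h) =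
      trH (fun i => F.obj (X i)) (fun i => F.map (t i)) m n h := by
  rw [trH, trH, trE, trE]
  obtain ⟨k, hk⟩ : ∃ k, m = n + k := ⟨m - n, by omega⟩
  subst hk
  simp [transComp_map X t F, eqToHom_map]

lemma trH_cancel [Preadditive C] {D : C} {m n : ℕ} (h : n ≤ m) (u v : X n ⟶ D)
    (huv : trH X t m n h ≫ u = trH X t m n h ≫ v) :
    ∃ k : ℕ, transComp X t n k ≫ u = transComp X t n k ≫ v := by
  obtain ⟨k, hk⟩ : ∃ k, m = n + k := ⟨m - n, by omega⟩
  subst hk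
  refine ⟨k, ?_⟩
  rwa [trH, trE_congr X t _ (rfl : n + k = n + k), trE_rfl] at huv

end Infra
section Shift

variable {C : Type u} [Category.{v} C] {D' : Type u} [Category.{v} D']
variable (X : ℕ → C) (t : ∀ n, X (n + 1) ⟶ X n)

lemma surj_map (F : C ⥤ C) [F.Full] [F.Faithful] [F.EssSurj] {L : C} (e : ∀ n, L ⟶ X n)
    (hsurj : ∀ (D : C) (ψ : L ⟶ D), ∃ (n : ℕ) (φ : X n ⟶ D), e n ≫ φ = ψ)
    (D : C) (ψ : F.obj L ⟶ D) :
    ∃ (n : ℕ) (φ : F.obj (X n) ⟶ D), F.map (e n) ≫ φ = ψ := by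
  let ι : F.obj (F.objPreimage D) ≅ D := F.objObjPreimageIso D
  obtain ⟨n, φ₀, hφ₀⟩ := hsurj (F.objPreimage D) (F.preimage (ψ ≫ ι.inv))
  refine ⟨n, F.map φ₀ ≫ ι.hom, ?_⟩
  rw [← Category.assoc, ← F.map_comp, hφ₀, F.map_preimage, Category.assoc,
    Iso.inv_hom_id, Category.comp_id]

lemma inj_map (F : C ⥤ C) [F.Full] [F.Faithful] [F.EssSurj] {L : C} (e : ∀ n, L ⟶ X n)
    (hinj : ∀ (D : C) (n : ℕ) (φ φ' : X n ⟶ D),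
      e n ≫ φ = e n ≫ φ' → ∃ k : ℕ, transComp X t n k ≫ φ = transComp X t n k ≫ φ')
    (D : C) (n : ℕ) (φ φ' : F.obj (X n) ⟶ D)
    (hyp : F.map (e n) ≫ φ = F.map (e n) ≫ φ') :
    ∃ k : ℕ, transComp (fun i => F.obj (X i)) (fun i => F.map (t i)) n k ≫ φ =
      transComp (fun i => F.obj (X i)) (fun i => F.map (t i)) n k ≫ φ' := by
  let ι : F.obj (F.objPreimage D) ≅ D := F.objObjPreimageIso D
  have key : e n ≫ F.preimage (φ ≫ ι.inv) = e n ≫ F.preimage (φ' ≫ ι.inv) := by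
    apply F.map_injective
    simp only [F.map_comp, F.map_preimage]
    rw [← Category.assoc, ← Category.assoc, hyp]
  obtain ⟨k, hk⟩ := hinj _ n _ _ key
  refine ⟨k, ?_⟩
  have := congrArg (fun q => F.map q ≫ ι.hom) hk
  simp only [F.map_comp, F.map_preimage, Category.assoc, Iso.inv_hom_id,
    Category.comp_id, transComp_map X t F] at this
  exact this

end Shift
section ML
universe u₁

variable {k : Type w} [Field k]

/-- Mittag-Leffler for inverse systems of nonempty affine subsets of Artinian modules. -/
lemma exists_compatible_family
    (M : ℕ → Type u₁) [∀ n, AddCommGroup (M n)] [∀ n, Module k (M n)]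
    [∀ n, IsArtinian k (M n)]
    (ρ : ∀ m n, n ≤ m → (M m →ₗ[k] M n))
    (hρ_comp : ∀ {m p n : ℕ} (h₁ : p ≤ m) (h₂ : n ≤ p) (x : M m),
      ρ p n h₂ (ρ m p h₁ x) = ρ m n (h₂.trans h₁) x)
    (S : ∀ n, Set (M n)) (V : ∀ n, Submodule k (M n))
    (hSne : ∀ n, (S n).Nonempty)
    (hSV₁ : ∀ n x y, x ∈ S n → y ∈ S n → x - y ∈ V n)
    (hSV₂ : ∀ n x v, x ∈ S n → v ∈ V n → x + v ∈ S n)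
    (hρS : ∀ m n (h : n ≤ m) x, x ∈ S m → ρ m n h x ∈ S n)
    (hρV : ∀ m n (h : n ≤ m) v, v ∈ V m → ρ m n h v ∈ V n) :
    ∃ x : ∀ n, M n, (∀ n, x n ∈ S n) ∧
      (∀ n, ρ (n + 1) n (Nat.le_succ n) (x (n + 1)) = x n) := by
  classical
  -- the decreasing system of images of the `V m` in `M n`
  let UU : ∀ n : ℕ, ℕ → Submodule k (M n) := fun n m =>
    if h : n ≤ m then (V m).map (ρ m n h) else ⊤
  have UU_eq : ∀ n m (h : n ≤ m), UU n m = (V m).map (ρ m n h) := by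
    intro n m h; simp only [UU, dif_pos h]
  have UU_anti : ∀ n m m' (h : n ≤ m), m ≤ m' → UU n m' ≤ UU n m := by
    intro n m m' h hmm'
    rw [UU_eq n m h, UU_eq n m' (h.trans hmm')]
    rintro x ⟨v, hv, rfl⟩
    exact ⟨ρ m' m hmm' v, hρV m' m hmm' v hv, hρ_comp hmm' h v⟩
  -- images of the sets `S m` in `M n`
  let TT : ∀ n : ℕ, ℕ → Set (M n) := fun n m =>
    if h : n ≤ m then (ρ m n h) '' (S m) else Set.univ
  have TT_eq : ∀ n m (h : n ≤ m), TT n m = (ρ m n h) '' (S m) := by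
    intro n m h; simp only [TT, dif_pos h]
  have TT_ne : ∀ n m, n ≤ m → (TT n m).Nonempty := by
    intro n m h
    obtain ⟨x, hx⟩ := hSne m
    exact ⟨ρ m n h x, by rw [TT_eq n m h]; exact ⟨x, hx, rfl⟩⟩
  have TT_subS : ∀ n m (h : n ≤ m), TT n m ⊆ S n := by
    intro n m h x hx
    rw [TT_eq n m h] at hx
    obtain ⟨y, hy, rfl⟩ := hx
    exact hρS m n h y hy
  have TT_anti : ∀ n m m' (h : n ≤ m), m ≤ m' → TT n m' ⊆ TT n m := by
    intro n m m' h hmm' x hx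
    rw [TT_eq n m' (h.trans hmm')] at hx
    obtain ⟨y, hy, rfl⟩ := hx
    rw [TT_eq n m h]
    exact ⟨ρ m' m hmm' y, hρS m' m hmm' y hy, hρ_comp hmm' h y⟩
  have TT_coset₁ : ∀ n m (h : n ≤ m) x y, x ∈ TT n m → y ∈ TT n m →
      x - y ∈ UU n m := by
    intro n m h x y hx hy
    rw [TT_eq n m h] at hx hy
    obtain ⟨x', hx', rfl⟩ := hx
    obtain ⟨y', hy', rfl⟩ := hy
    rw [UU_eq n m h, ← map_sub]
    exact ⟨x' - y', hSV₁ m x' y' hx' hy', rfl⟩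
  have TT_coset₂ : ∀ n m (h : n ≤ m) x v, x ∈ TT n m → v ∈ UU n m →
      x + v ∈ TT n m := by
    intro n m h x v hx hv
    rw [TT_eq n m h] at hx ⊢
    rw [UU_eq n m h] at hv
    obtain ⟨x', hx', rfl⟩ := hx
    obtain ⟨v', hv', rfl⟩ := hv
    exact ⟨x' + v', hSV₂ m x' v' hx' hv', map_add _ _ _⟩
  -- stabilization of the `UU`
  have stab : ∀ n, ∃ N, n ≤ N ∧ ∀ m, N ≤ m → UU n m = UU n N := by
    intro n
    have hmono : Monotone (fun j => OrderDual.toDual (UU n (n + j))) := by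
      intro j j' hj
      exact UU_anti n (n + j) (n + j') (Nat.le_add_right n j) (by omega)
    obtain ⟨j₀, hj₀⟩ := IsArtinian.monotone_stabilizes (⟨_, hmono⟩ : ℕ →o (Submodule k (M n))ᵒᵈ)
    refine ⟨n + j₀, Nat.le_add_right n j₀, fun m hm => ?_⟩
    have h1 : n + (m - n) = m := by omega
    have := hj₀ (m - n) (by omega)
    simpa only [OrderHom.coe_mk, h1, OrderDual.ofDual_toDual] using congrArg OrderDual.ofDual this.symm
  choose N hNle hNstab using stab
  -- the stable images
  have TT_stable : ∀ n m, N n ≤ m → TT n m = TT n (N n) := by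
    intro n m hm
    apply Set.Subset.antisymm (TT_anti n (N n) m (hNle n) hm)
    intro x hx
    obtain ⟨y, hy⟩ := TT_ne n m ((hNle n).trans hm)
    have h1 : x - y ∈ UU n m := by
      rw [hNstab n m hm]
      exact TT_coset₁ n (N n) (hNle n) x y hx (TT_anti n (N n) m (hNle n) hm hy)
    have := TT_coset₂ n m ((hNle n).trans hm) y (x - y) hy h1
    simpa using this
  set Sinf : ∀ n, Set (M n) := fun n => TT n (N n) with hSinf
  have Sinf_ne : ∀ n, (Sinf n).Nonempty := fun n => TT_ne n (N n) (hNle n)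
  have Sinf_sub : ∀ n, Sinf n ⊆ S n := fun n => TT_subS n (N n) (hNle n)
  have lift : ∀ n x, x ∈ Sinf n → ∃ y, y ∈ Sinf (n + 1) ∧
      ρ (n + 1) n (Nat.le_succ n) y = x := by
    intro n x hx
    set m := max (N n) (N (n + 1)) + n + 2 with hm
    have hm1 : N n ≤ m := by omega
    have hm2 : N (n + 1) ≤ m := by omega
    have hm3 : n + 1 ≤ m := by omega
    have hx2 : x ∈ TT n m := by rw [TT_stable n m hm1]; exact hx
    rw [TT_eq n m (by omega)] at hx2
    obtain ⟨x', hx', hρx'⟩ := hx2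
    refine ⟨ρ m (n + 1) hm3 x', ?_, ?_⟩
    · show _ ∈ TT (n + 1) (N (n + 1))
      rw [← TT_stable (n + 1) m hm2, TT_eq (n + 1) m hm3]
      exact ⟨x', hx', rfl⟩
    · rw [hρ_comp hm3 (Nat.le_succ n) x', ← hρx']
  -- build the compatible sequence
  obtain ⟨x₀, hx₀⟩ := Sinf_ne 0
  let F : ∀ n, {x : M n // x ∈ Sinf n} := fun n =>
    Nat.rec ⟨x₀, hx₀⟩
      (fun n p => ⟨(lift n p.1 p.2).choose, (lift n p.1 p.2).choose_spec.1⟩) n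
  refine ⟨fun n => (F n).1, fun n => Sinf_sub n (F n).2, fun n => ?_⟩
  exact (lift n (F n).1 (F n).2).choose_spec.2

end ML
/-- Let `C` be a triangulated category linear over a field `k` with
finite-dimensional morphism spaces, and let `(A n → B n → Z n → A n⟦1⟧)` be an inverse
system of distinguished triangles.  If the inverse systems `(A n)` and `(Z n)` are
constant as pro-objects, then so is `(B n)`. -/
theorem statement1 (k : Type w) [Field k]
    {C : Type u} [Category.{v} C] [Preadditive C] [Linear k C]
    [HasZeroObject C] [HasShift C ℤ] [∀ n : ℤ, (shiftFunctor C n).Additive]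
    [Pretriangulated C]
    (hfin : ∀ X Y : C, FiniteDimensional k (X ⟶ Y))
    (A B Z : ℕ → C)
    (f : ∀ n, A n ⟶ B n) (g : ∀ n, B n ⟶ Z n) (h : ∀ n, Z n ⟶ (A n)⟦(1 : ℤ)⟧)
    (hdist : ∀ n, Triangle.mk (f n) (g n) (h n) ∈ distTriang C)
    (a : ∀ n, A (n + 1) ⟶ A n) (b : ∀ n, B (n + 1) ⟶ B n) (c : ∀ n, Z (n + 1) ⟶ Z n)
    (hsq₁ : ∀ n, f (n + 1) ≫ b n = a n ≫ f n)
    (hsq₂ : ∀ n, g (n + 1) ≫ c n = b n ≫ g n)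
    (hsq₃ : ∀ n, h (n + 1) ≫ (a n)⟦(1 : ℤ)⟧' = c n ≫ h n)
    (hA : IsConstantPro A a) (hZ : IsConstantPro Z c) :
    IsConstantPro B b := by
  classical
  obtain ⟨LA, eA, hcA, sA, iA⟩ := hA
  obtain ⟨LZ, eZ, hcZ, sZ, iZ⟩ := hZ
  -- shifted systems
  set A1 : ℕ → C := fun i => (A i)⟦(1 : ℤ)⟧ with hA1def
  set a1 : ∀ i, A1 (i + 1) ⟶ A1 i := fun i => (a i)⟦(1 : ℤ)⟧' with ha1def
  set eA1 : ∀ i, LA⟦(1 : ℤ)⟧ ⟶ A1 i := fun i => (eA i)⟦(1 : ℤ)⟧' with heA1def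
  set Zm : ℕ → C := fun i => (Z i)⟦(-1 : ℤ)⟧ with hZmdef
  set cm : ∀ i, Zm (i + 1) ⟶ Zm i := fun i => (c i)⟦(-1 : ℤ)⟧' with hcmdef
  have hcA1 : ∀ i, eA1 (i + 1) ≫ a1 i = eA1 i := by
    intro i
    simp only [heA1def, ha1def]
    rw [← Functor.map_comp, hcA i]
  have sA1 : ∀ (D : C) (ψ : LA⟦(1 : ℤ)⟧ ⟶ D), ∃ (i : ℕ) (φ : A1 i ⟶ D),
      eA1 i ≫ φ = ψ := surj_map A (shiftFunctor C (1 : ℤ)) eA sA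
  have iA1 : ∀ (D : C) (i : ℕ) (φ φ' : A1 i ⟶ D), eA1 i ≫ φ = eA1 i ≫ φ' →
      ∃ j : ℕ, transComp A1 a1 i j ≫ φ = transComp A1 a1 i j ≫ φ' :=
    inj_map A a (shiftFunctor C (1 : ℤ)) eA iA
  have iZm : ∀ (D : C) (i : ℕ) (φ φ' : Zm i ⟶ D),
      (eZ i)⟦(-1 : ℤ)⟧' ≫ φ = (eZ i)⟦(-1 : ℤ)⟧' ≫ φ' →
      ∃ j : ℕ, transComp Zm cm i j ≫ φ = transComp Zm cm i j ≫ φ' :=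
    inj_map Z c (shiftFunctor C (-1 : ℤ)) eZ iZ
  -- transition compatibilities
  have dA : ∀ {m n : ℕ} (hmn : n ≤ m), eA m ≫ trH A a m n hmn = eA n :=
    fun hmn => trH_e A a eA hcA hmn
  have dZ : ∀ {m n : ℕ} (hmn : n ≤ m), eZ m ≫ trH Z c m n hmn = eZ n :=
    fun hmn => trH_e Z c eZ hcZ hmn
  have dA1 : ∀ {m n : ℕ} (hmn : n ≤ m), eA1 m ≫ trH A1 a1 m n hmn = eA1 n :=
    fun hmn => trH_e A1 a1 eA1 hcA1 hmn
  have sqF : ∀ {m n : ℕ} (hmn : n ≤ m),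
      f m ≫ trH B b m n hmn = trH A a m n hmn ≫ f n := fun hmn => trH_sq A a f hsq₁ hmn
  have sqG : ∀ {m n : ℕ} (hmn : n ≤ m),
      g m ≫ trH Z c m n hmn = trH B b m n hmn ≫ g n := fun hmn => trH_sq B b g hsq₂ hmn
  have sqH : ∀ {m n : ℕ} (hmn : n ≤ m),
      h m ≫ trH A1 a1 m n hmn = trH Z c m n hmn ≫ h n := fun hmn => trH_sq Z c h hsq₃ hmn
  -- construction of the connecting morphism hL
  obtain ⟨m₀, φ₀, hφ₀⟩ := sA1 (LA⟦(1 : ℤ)⟧) (𝟙 _)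
  set hL : LZ ⟶ LA⟦(1 : ℤ)⟧ := eZ m₀ ≫ h m₀ ≫ φ₀ with hhLdef
  have sq3 : ∀ n, hL ≫ eA1 n = eZ n ≫ h n := by
    intro n
    rcases le_total n m₀ with h1 | h1
    · have e1 : eA1 m₀ ≫ (φ₀ ≫ eA1 n) = eA1 m₀ ≫ trH A1 a1 m₀ n h1 := by
        rw [← Category.assoc, hφ₀, Category.id_comp, dA1 h1]
      obtain ⟨j, hj⟩ := iA1 _ m₀ _ _ e1
      rw [transComp_toTrH] at hj
      have hm₀j : m₀ ≤ m₀ + j := Nat.le_add_right m₀ j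
      calc hL ≫ eA1 n
          = eZ m₀ ≫ h m₀ ≫ φ₀ ≫ eA1 n := by
            rw [hhLdef]; simp only [Category.assoc]
        _ = eZ (m₀ + j) ≫ trH Z c (m₀ + j) m₀ hm₀j ≫ h m₀ ≫ φ₀ ≫ eA1 n := by
            rw [reassoc_of% (dZ hm₀j)]
        _ = eZ (m₀ + j) ≫ h (m₀ + j) ≫ trH A1 a1 (m₀ + j) m₀ hm₀j ≫ φ₀ ≫ eA1 n := by
            rw [reassoc_of% (sqH hm₀j)]
        _ = eZ (m₀ + j) ≫ h (m₀ + j) ≫ trH A1 a1 (m₀ + j) m₀ hm₀j ≫ trH A1 a1 m₀ n h1 := by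
            rw [hj]
        _ = eZ (m₀ + j) ≫ h (m₀ + j) ≫ trH A1 a1 (m₀ + j) n (h1.trans hm₀j) := by
            rw [trH_comp]
        _ = eZ (m₀ + j) ≫ trH Z c (m₀ + j) n (h1.trans hm₀j) ≫ h n := by
            rw [sqH (h1.trans hm₀j)]
        _ = eZ n ≫ h n := by rw [reassoc_of% (dZ (h1.trans hm₀j))]
    · -- m₀ ≤ n
      set ψ : A1 n ⟶ LA⟦(1 : ℤ)⟧ := trH A1 a1 n m₀ h1 ≫ φ₀ with hψdef
      have hψ : eA1 n ≫ ψ = 𝟙 _ := by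
        rw [hψdef, ← Category.assoc, dA1 h1, hφ₀]
      have e1 : eA1 n ≫ (ψ ≫ eA1 n) = eA1 n ≫ 𝟙 (A1 n) := by
        rw [← Category.assoc, hψ, Category.id_comp, Category.comp_id]
      obtain ⟨j, hj⟩ := iA1 _ n _ _ e1
      rw [transComp_toTrH, Category.comp_id] at hj
      have hnj : n ≤ n + j := Nat.le_add_right n j
      calc hL ≫ eA1 n
          = eZ m₀ ≫ h m₀ ≫ φ₀ ≫ eA1 n := by
            rw [hhLdef]; simp only [Category.assoc]
        _ = eZ n ≫ trH Z c n m₀ h1 ≫ h m₀ ≫ φ₀ ≫ eA1 n := by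
            rw [reassoc_of% (dZ h1)]
        _ = eZ n ≫ h n ≫ trH A1 a1 n m₀ h1 ≫ φ₀ ≫ eA1 n := by
            rw [reassoc_of% (sqH h1)]
        _ = eZ n ≫ h n ≫ ψ ≫ eA1 n := by
            rw [hψdef]; simp only [Category.assoc]
        _ = eZ (n + j) ≫ trH Z c (n + j) n hnj ≫ h n ≫ ψ ≫ eA1 n := by
            rw [reassoc_of% (dZ hnj)]
        _ = eZ (n + j) ≫ h (n + j) ≫ trH A1 a1 (n + j) n hnj ≫ ψ ≫ eA1 n := by
            rw [reassoc_of% (sqH hnj)]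
        _ = eZ (n + j) ≫ h (n + j) ≫ trH A1 a1 (n + j) n hnj := by
            rw [hj]
        _ = eZ (n + j) ≫ trH Z c (n + j) n hnj ≫ h n := by
            rw [sqH hnj]
        _ = eZ n ≫ h n := by rw [reassoc_of% (dZ hnj)]
  -- the limit triangle
  obtain ⟨LB, fL, gL, hTL⟩ := distinguished_cocone_triangle₂ hL
  -- candidate maps LB ⟶ B n
  have Sne : ∀ n, ∃ β : LB ⟶ B n, fL ≫ β = eA n ≫ f n ∧ gL ≫ eZ n = β ≫ g n := by
    intro n
    obtain ⟨β, hβ₁, hβ₂⟩ := complete_distinguished_triangle_morphism₂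
      (Triangle.mk fL gL hL) (Triangle.mk (f n) (g n) (h n)) hTL (hdist n)
      (eA n) (eZ n) (sq3 n)
    exact ⟨β, hβ₁, hβ₂⟩
  -- the connecting maps of the inverse-rotated triangles
  set w : ∀ n, Zm n ⟶ A n := fun n => (Triangle.mk (f n) (g n) (h n)).invRotate.mor₁
    with hwdef
  set wL : LZ⟦(-1 : ℤ)⟧ ⟶ LA := (Triangle.mk fL gL hL).invRotate.mor₁ with hwLdef
  have wf : ∀ n, w n ≫ f n = 0 := fun n =>
    comp_distTriang_mor_zero₁₂ _ (inv_rot_of_distTriang _ (hdist n))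
  have wLfL : wL ≫ fL = 0 :=
    comp_distTriang_mor_zero₁₂ _ (inv_rot_of_distTriang _ hTL)
  have sqWt : ∀ n, w (n + 1) ≫ a n = cm n ≫ w n := by
    intro n
    exact ((invRotate C).map (Triangle.homMk
      (Triangle.mk (f (n + 1)) (g (n + 1)) (h (n + 1))) (Triangle.mk (f n) (g n) (h n))
      (a n) (b n) (c n) (hsq₁ n) (hsq₂ n) (hsq₃ n))).comm₁
  have sqWL : ∀ n, wL ≫ eA n = (eZ n)⟦(-1 : ℤ)⟧' ≫ w n := by
    intro n
    obtain ⟨β, hβ₁, hβ₂⟩ := Sne n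
    exact ((invRotate C).map (Triangle.homMk
      (Triangle.mk fL gL hL) (Triangle.mk (f n) (g n) (h n))
      (eA n) β (eZ n) hβ₁ hβ₂ (sq3 n))).comm₁
  have sqW : ∀ {m n : ℕ} (hmn : n ≤ m),
      w m ≫ trH A a m n hmn = trH Zm cm m n hmn ≫ w n := fun hmn =>
    trH_sq Zm cm w sqWt hmn
  -- Mittag-Leffler: choose compatible maps eB n
  haveI : ∀ n : ℕ, IsArtinian k (LB ⟶ B n) := by
    intro n
    haveI := hfin LB (B n)
    infer_instance
  obtain ⟨eB, heBS, hcB⟩ := exists_compatible_family (k := k)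
    (M := fun n => (LB ⟶ B n))
    (ρ := fun m n hmn => Linear.rightComp k LB (trH B b m n hmn))
    (hρ_comp := by
      intro m p n h₁ h₂ x
      simp only [Linear.rightComp_apply, Category.assoc, trH_comp])
    (S := fun n => {β : LB ⟶ B n | fL ≫ β = eA n ≫ f n ∧ gL ≫ eZ n = β ≫ g n})
    (V := fun n => LinearMap.ker (Linear.leftComp k (B n) fL) ⊓
      LinearMap.ker (Linear.rightComp k LB (g n)))
    (hSne := by
      intro n
      obtain ⟨β, hβ₁, hβ₂⟩ := Sne n
      exact ⟨β, hβ₁, hβ₂⟩)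
    (hSV₁ := by
      rintro n x y ⟨hx₁, hx₂⟩ ⟨hy₁, hy₂⟩
      refine Submodule.mem_inf.mpr ⟨LinearMap.mem_ker.mpr ?_, LinearMap.mem_ker.mpr ?_⟩
      · show fL ≫ (x - y) = 0
        rw [Preadditive.comp_sub, hx₁, hy₁, sub_self]
      · show (x - y) ≫ g n = 0
        rw [Preadditive.sub_comp, ← hx₂, ← hy₂, sub_self])
    (hSV₂ := by
      rintro n x v ⟨hx₁, hx₂⟩ hv
      obtain ⟨hv₁, hv₂⟩ := Submodule.mem_inf.mp hv
      have hv₁' : fL ≫ v = 0 := hv₁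
      have hv₂' : v ≫ g n = 0 := hv₂
      constructor
      · show fL ≫ (x + v) = eA n ≫ f n
        rw [Preadditive.comp_add, hx₁, hv₁', add_zero]
      · show gL ≫ eZ n = (x + v) ≫ g n
        rw [Preadditive.add_comp, hv₂', add_zero]
        exact hx₂)
    (hρS := by
      rintro m n hmn x ⟨hx₁, hx₂⟩
      constructor
      · show fL ≫ (x ≫ trH B b m n hmn) = eA n ≫ f n
        rw [← Category.assoc, hx₁, Category.assoc, sqF hmn, ← Category.assoc, dA hmn]
      · show gL ≫ eZ n = (x ≫ trH B b m n hmn) ≫ g n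
        rw [Category.assoc, ← sqG hmn, ← Category.assoc, ← hx₂, Category.assoc, dZ hmn])
    (hρV := by
      rintro m n hmn v hv
      obtain ⟨hv₁, hv₂⟩ := Submodule.mem_inf.mp hv
      have hv₁' : fL ≫ v = 0 := hv₁
      have hv₂' : v ≫ g m = 0 := hv₂
      refine Submodule.mem_inf.mpr ⟨LinearMap.mem_ker.mpr ?_, LinearMap.mem_ker.mpr ?_⟩
      · show fL ≫ (v ≫ trH B b m n hmn) = 0
        rw [← Category.assoc, hv₁', zero_comp]
      · show (v ≫ trH B b m n hmn) ≫ g n = 0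
        rw [Category.assoc, ← sqG hmn, ← Category.assoc, hv₂', zero_comp])
  simp only [Linear.rightComp_apply] at hcB
  have hcB' : ∀ n, eB (n + 1) ≫ b n = eB n := by
    intro n
    rw [← hcB n, trH_succ]
  have eBf : ∀ n, fL ≫ eB n = eA n ≫ f n := fun n => (heBS n).1
  have eBg : ∀ n, gL ≫ eZ n = eB n ≫ g n := fun n => (heBS n).2
  have dB : ∀ {m n : ℕ} (hmn : n ≤ m), eB m ≫ trH B b m n hmn = eB n :=
    fun hmn => trH_e B b eB hcB' hmn
  refine ⟨LB, eB, hcB', ?_, ?_⟩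
  · -- surjectivity
    intro D ψ
    obtain ⟨n, α, hα⟩ := sA D (fL ≫ ψ)
    have key0 : (eZ n)⟦(-1 : ℤ)⟧' ≫ (w n ≫ α) = (eZ n)⟦(-1 : ℤ)⟧' ≫ 0 := by
      rw [comp_zero, ← Category.assoc, ← sqWL n, Category.assoc, hα,
        ← Category.assoc, wLfL, zero_comp]
    obtain ⟨k₁, hk₁⟩ := iZm D n (w n ≫ α) 0 key0
    rw [comp_zero, transComp_toTrH] at hk₁
    have hn₁ : n ≤ n + k₁ := Nat.le_add_right n k₁
    have h1 : w (n + k₁) ≫ (trH A a (n + k₁) n hn₁ ≫ α) = 0 := by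
      rw [← Category.assoc, sqW hn₁, Category.assoc]
      exact hk₁
    obtain ⟨β, hβ⟩ := Triangle.yoneda_exact₂ _ (inv_rot_of_distTriang _ (hdist (n + k₁)))
      (trH A a (n + k₁) n hn₁ ≫ α) h1
    rw [show (Triangle.mk (f (n + k₁)) (g (n + k₁)) (h (n + k₁))).invRotate.mor₂ =
      f (n + k₁) from rfl] at hβ
    change B (n + k₁) ⟶ D at β
    replace hβ : trH A a (n + k₁) n hn₁ ≫ α = f (n + k₁) ≫ β := hβ
    have h2 : fL ≫ (ψ - eB (n + k₁) ≫ β) = 0 := by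
      rw [Preadditive.comp_sub, ← Category.assoc, eBf (n + k₁), Category.assoc, ← hβ,
        ← Category.assoc, dA hn₁, hα, sub_self]
    obtain ⟨ζ, hζ⟩ := Triangle.yoneda_exact₂ _ hTL (ψ - eB (n + k₁) ≫ β) h2
    rw [show (Triangle.mk fL gL hL).mor₂ = gL from rfl] at hζ
    change LZ ⟶ D at ζ
    replace hζ : ψ - eB (n + k₁) ≫ β = gL ≫ ζ := hζ
    obtain ⟨p, ρ₀, hρ₀⟩ := sZ D ζ
    have hq₁ : n + k₁ ≤ max (n + k₁) p := le_max_left _ _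
    have hq₂ : p ≤ max (n + k₁) p := le_max_right _ _
    refine ⟨max (n + k₁) p, trH B b _ _ hq₁ ≫ β + g _ ≫ trH Z c _ _ hq₂ ≫ ρ₀, ?_⟩
    rw [Preadditive.comp_add, ← Category.assoc, dB hq₁, ← Category.assoc, ← eBg _,
      Category.assoc, ← Category.assoc (eZ (max (n + k₁) p)), dZ hq₂, hρ₀, ← hζ]
    abel
  · -- injectivity
    intro D n φ φ' hyp
    have hδ : eB n ≫ (φ - φ') = 0 := by
      rw [Preadditive.comp_sub, hyp, sub_self]
    suffices hsuf : ∃ (m : ℕ) (hm : n ≤ m), trH B b m n hm ≫ (φ - φ') = 0 by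
      obtain ⟨m, hm, h0⟩ := hsuf
      apply trH_cancel B b hm φ φ'
      rwa [← sub_eq_zero, ← Preadditive.comp_sub]
    have s1 : eA n ≫ (f n ≫ (φ - φ')) = eA n ≫ 0 := by
      rw [comp_zero, ← Category.assoc, ← eBf n, Category.assoc, hδ, comp_zero]
    obtain ⟨k₁, hk₁⟩ := iA D n _ 0 s1
    rw [comp_zero, transComp_toTrH] at hk₁
    have hn₁ : n ≤ n + k₁ := Nat.le_add_right n k₁
    have h1 : f (n + k₁) ≫ (trH B b (n + k₁) n hn₁ ≫ (φ - φ')) = 0 := by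
      rw [← Category.assoc, sqF hn₁, Category.assoc]
      exact hk₁
    obtain ⟨ε, hε⟩ := Triangle.yoneda_exact₂ _ (hdist (n + k₁))
      (trH B b (n + k₁) n hn₁ ≫ (φ - φ')) h1
    rw [show (Triangle.mk (f (n + k₁)) (g (n + k₁)) (h (n + k₁))).mor₂ =
      g (n + k₁) from rfl] at hε
    change Z (n + k₁) ⟶ D at ε
    replace hε : trH B b (n + k₁) n hn₁ ≫ (φ - φ') = g (n + k₁) ≫ ε := hε
    have s2 : gL ≫ (eZ (n + k₁) ≫ ε) = 0 := by
      rw [← Category.assoc, eBg (n + k₁), Category.assoc, ← hε, ← Category.assoc,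
        dB hn₁, hδ]
    obtain ⟨θ, hθ⟩ := Triangle.yoneda_exact₃ _ hTL (eZ (n + k₁) ≫ ε) s2
    rw [show (Triangle.mk fL gL hL).mor₃ = hL from rfl] at hθ
    change LA⟦(1 : ℤ)⟧ ⟶ D at θ
    replace hθ : eZ (n + k₁) ≫ ε = hL ≫ θ := hθ
    obtain ⟨p, τ, hτ⟩ := sA1 D θ
    have s3 : eZ (n + k₁) ≫ ε = eZ p ≫ (h p ≫ τ) := by
      rw [hθ, ← hτ, ← Category.assoc, sq3 p, Category.assoc]
    have hq₁ : n + k₁ ≤ max (n + k₁) p := le_max_left _ _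
    have hq₂ : p ≤ max (n + k₁) p := le_max_right _ _
    set q := max (n + k₁) p with hqdef
    have s4 : eZ q ≫ (trH Z c q (n + k₁) hq₁ ≫ ε) =
        eZ q ≫ (trH Z c q p hq₂ ≫ (h p ≫ τ)) := by
      rw [← Category.assoc, dZ hq₁, ← Category.assoc, dZ hq₂]
      exact s3
    obtain ⟨k₂, hk₂⟩ := iZ D q _ _ s4
    rw [transComp_toTrH] at hk₂
    have hqr : q ≤ q + k₂ := Nat.le_add_right q k₂
    refine ⟨q + k₂, by omega, ?_⟩
    have hrn₁ : n + k₁ ≤ q + k₂ := hq₁.trans hqr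
    have hrp : p ≤ q + k₂ := hq₂.trans hqr
    have s5 : trH Z c (q + k₂) (n + k₁) hrn₁ ≫ ε =
        trH Z c (q + k₂) p hrp ≫ h p ≫ τ := by
      rw [← trH_comp Z c hqr hq₁, ← trH_comp Z c hqr hq₂]
      simp only [Category.assoc]
      rw [← Category.assoc (trH Z c (q + k₂) q hqr), ← Category.assoc (trH Z c (q + k₂) q hqr)]
      simp only [Category.assoc]
      exact hk₂
    calc trH B b (q + k₂) n (hn₁.trans hrn₁) ≫ (φ - φ')
        = trH B b (q + k₂) (n + k₁) hrn₁ ≫ trH B b (n + k₁) n hn₁ ≫ (φ - φ') := by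
          rw [← Category.assoc, trH_comp]
      _ = trH B b (q + k₂) (n + k₁) hrn₁ ≫ g (n + k₁) ≫ ε := by rw [← hε]
      _ = g (q + k₂) ≫ trH Z c (q + k₂) (n + k₁) hrn₁ ≫ ε := by
          rw [← Category.assoc, ← sqG hrn₁, Category.assoc]
      _ = g (q + k₂) ≫ trH Z c (q + k₂) p hrp ≫ h p ≫ τ := by rw [s5]
      _ = trH B b (q + k₂) p hrp ≫ g p ≫ h p ≫ τ := by
          rw [← Category.assoc, sqG hrp, Category.assoc]
      _ = 0 := by
          have hz : g p ≫ h p = 0 := comp_distTriang_mor_zero₂₃ _ (hdist p)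
          rw [← Category.assoc (g p), hz, zero_comp, comp_zero]
end

section
/- For every ε ∈ (−1/2, 1/2) and all partitions p, p′ ∈ 𝒫(n) with p′ ≤ p in the dominance order, one has |v_ε(p)| ≤ |v_ε(p′)|; that is, the map v_ε : 𝒫(n) → (ε+ℤ)ⁿ₊ is order-reversing with respect to dominance order and Euclidean norm. -/
open Finset

/-- A partition of `N`: an antitone function `ℕ → ℕ` (the 0-indexed parts, padded with
zeros) supported on `{0, …, N-1}` whose parts sum to `N`. -/
def IsPartition (N : ℕ) (p : ℕ → ℕ) : Prop :=
  Antitone p ∧ (∀ i, N ≤ i → p i = 0) ∧ ∑ i ∈ Finset.range N, p i = N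

/-- Dominance order: `Dominates p q` means `q ≤ p`, i.e. every partial sum of the parts
of `q` is at most the corresponding partial sum of the parts of `p`. -/
def Dominates (p q : ℕ → ℕ) : Prop :=
  ∀ j, ∑ i ∈ Finset.range j, q i ≤ ∑ i ∈ Finset.range j, p i

/-- Multiplicity of the value `k` among the first `N` parts of `p`. -/
def mult (N : ℕ) (p : ℕ → ℕ) (k : ℕ) : ℕ :=
  ((Finset.range N).filter (fun i => p i = k)).card

/-- Multiplicity of the real value `s` among the entries of the tuple `v`. -/
noncomputable def multR {n : ℕ} (v : Fin n → ℝ) (s : ℝ) : ℕ :=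
  {i : Fin n | v i = s}.ncard

/-- Euclidean norm of a real tuple. -/
noncomputable def enormR {n : ℕ} (v : Fin n → ℝ) : ℝ :=
  Real.sqrt (∑ i, (v i) ^ 2)

/-- `IsVEps n ε p w` says that the weakly decreasing tuple `w : Fin n → ℝ` is `v_ε(p)`:
its entries lie in `ε + ℤ`, `ε` occurs with multiplicity `p 0 = μ₀`, and for `k ≥ 1`
(writing the parts of `p` as `[μ₀, μ₁, μ₁', μ₂, μ₂', …]`, so `μ_k = p (2k-1)` and
`μ_k' = p (2k)`), if `ε ≥ 0` then `ε - k` occurs `μ_k` times and `ε + k` occurs `μ_k'`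
times, while if `ε < 0` then `ε + k` occurs `μ_k` times and `ε - k` occurs `μ_k'` times. -/
def IsVEps (n : ℕ) (ε : ℝ) (p : ℕ → ℕ) (w : Fin n → ℝ) : Prop :=
  Antitone w ∧ (∀ i, ∃ k : ℤ, w i = ε + (k : ℝ)) ∧
  multR w ε = p 0 ∧
  ∀ k : ℕ, 1 ≤ k →
    ((0 ≤ ε → multR w (ε - (k : ℝ)) = p (2 * k - 1) ∧ multR w (ε + (k : ℝ)) = p (2 * k)) ∧
     (ε < 0 → multR w (ε + (k : ℝ)) = p (2 * k - 1) ∧ multR w (ε - (k : ℝ)) = p (2 * k)))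

noncomputable def valE (ε : ℝ) (j : ℕ) : ℝ :=
  ε + (if (j % 2 = 1) ↔ (0 ≤ ε) then -1 else 1) * (((j + 1) / 2 : ℕ) : ℝ)

lemma valE_zero (ε : ℝ) : valE ε 0 = ε := by
  unfold valE; norm_num

lemma valE_odd_pos {ε : ℝ} (hε : 0 ≤ ε) {k : ℕ} (hk : 1 ≤ k) :
    valE ε (2 * k - 1) = ε - k := by
  unfold valE
  have h1 : (2 * k - 1) % 2 = 1 := by omega
  have h2 : ((2 * k - 1) + 1) / 2 = k := by omega
  rw [h2, if_pos (iff_of_true h1 hε)]; ring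

lemma valE_even_pos {ε : ℝ} (hε : 0 ≤ ε) {k : ℕ} (_hk : 1 ≤ k) :
    valE ε (2 * k) = ε + k := by
  unfold valE
  have h1 : (2 * k) % 2 = 0 := by omega
  have h2 : ((2 * k) + 1) / 2 = k := by omega
  rw [h2, if_neg (by simp [h1, hε])]; ring

lemma valE_odd_neg {ε : ℝ} (hε : ε < 0) {k : ℕ} (hk : 1 ≤ k) :
    valE ε (2 * k - 1) = ε + k := by
  unfold valE
  have h1 : (2 * k - 1) % 2 = 1 := by omega
  have h2 : ((2 * k - 1) + 1) / 2 = k := by omega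
  rw [h2, if_neg (by simp [h1, hε, not_le])]; ring

lemma valE_even_neg {ε : ℝ} (hε : ε < 0) {k : ℕ} (_hk : 1 ≤ k) :
    valE ε (2 * k) = ε - k := by
  unfold valE
  have h1 : (2 * k) % 2 = 0 := by omega
  have h2 : ((2 * k) + 1) / 2 = k := by omega
  rw [h2, if_pos (iff_of_false (by omega) (not_le.mpr hε))]; ring

lemma valE_inj (ε : ℝ) {a b : ℕ} (h : valE ε a = valE ε b) : a = b := by
  unfold valE at h
  have hca : (0:ℝ) ≤ (((a + 1) / 2 : ℕ) : ℝ) := Nat.cast_nonneg _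
  have hcb : (0:ℝ) ≤ (((b + 1) / 2 : ℕ) : ℝ) := Nat.cast_nonneg _
  by_cases pa : (a % 2 = 1) ↔ (0 ≤ ε) <;> by_cases pb : (b % 2 = 1) ↔ (0 ≤ ε)
  · rw [if_pos pa, if_pos pb] at h
    have hk : ((a + 1) / 2 : ℕ) = (b + 1) / 2 := by
      exact_mod_cast (by linarith : (((a+1)/2 : ℕ):ℝ) = ((b+1)/2 : ℕ))
    have hiff : (a % 2 = 1) ↔ (b % 2 = 1) := pa.trans pb.symm
    omega
  · rw [if_pos pa, if_neg pb] at h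
    have ha : ((a + 1) / 2 : ℕ) = 0 := by exact_mod_cast (by linarith : (((a+1)/2 : ℕ):ℝ) = 0)
    have hb : ((b + 1) / 2 : ℕ) = 0 := by exact_mod_cast (by linarith : (((b+1)/2 : ℕ):ℝ) = 0)
    omega
  · rw [if_neg pa, if_pos pb] at h
    have ha : ((a + 1) / 2 : ℕ) = 0 := by exact_mod_cast (by linarith : (((a+1)/2 : ℕ):ℝ) = 0)
    have hb : ((b + 1) / 2 : ℕ) = 0 := by exact_mod_cast (by linarith : (((b+1)/2 : ℕ):ℝ) = 0)
    omega
  · rw [if_neg pa, if_neg pb] at h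
    have hk : ((a + 1) / 2 : ℕ) = (b + 1) / 2 := by
      exact_mod_cast (by linarith : (((a+1)/2 : ℕ):ℝ) = ((b+1)/2 : ℕ))
    have hiff : (a % 2 = 1) ↔ (b % 2 = 1) := by tauto
    omega

lemma valE_sq_mono {ε : ℝ} (hε₁ : -(1 / 2 : ℝ) < ε) (hε₂ : ε < 1 / 2) :
    Monotone (fun j => (valE ε j) ^ 2) := by
  apply monotone_nat_of_le_succ
  intro j
  unfold valE
  rcases Nat.mod_two_eq_zero_or_one j with hj | hj
  · have hj1 : (j + 1) % 2 = 1 := by omega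
    have hk : ((j + 1 + 1) / 2 : ℕ) = (j + 1) / 2 + 1 := by omega
    rw [hk]
    by_cases hε : 0 ≤ ε
    · rw [if_neg (by simp [hj, hε]), if_pos (iff_of_true hj1 hε)]
      have : (0:ℝ) ≤ (((j+1)/2 : ℕ) : ℝ) := Nat.cast_nonneg _
      push_cast
      nlinarith
    · rw [if_pos (iff_of_false (by omega) hε), if_neg (by simp [hj1, hε])]
      have : (0:ℝ) ≤ (((j+1)/2 : ℕ) : ℝ) := Nat.cast_nonneg _
      push_cast
      nlinarith
  · have hj1 : (j + 1) % 2 = 0 := by omega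
    have hk : ((j + 1 + 1) / 2 : ℕ) = (j + 1) / 2 := by omega
    have hk1 : 1 ≤ ((j + 1) / 2 : ℕ) := by omega
    have hk1' : (1:ℝ) ≤ (((j+1)/2 : ℕ) : ℝ) := by exact_mod_cast hk1
    rw [hk]
    by_cases hε : 0 ≤ ε
    · rw [if_pos (iff_of_true hj hε), if_neg (by simp [hj1, hε])]
      nlinarith
    · rw [if_neg (by simp [hj, hε]), if_pos (iff_of_false (by omega) hε)]
      nlinarith

lemma abel_ineq (c : ℕ → ℝ) (hc : Monotone c) (d : ℕ → ℝ)
    (hd : ∀ m, ∑ j ∈ range m, d j ≤ 0) :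
    ∀ M, (∑ j ∈ range (M + 1), d j) * c M ≤ ∑ j ∈ range (M + 1), d j * c j := by
  intro M
  induction M with
  | zero => simp
  | succ M ih =>
    rw [Finset.sum_range_succ (f := d), Finset.sum_range_succ (f := fun j => d j * c j)]
    have h1 : (∑ j ∈ range (M + 1), d j) * c (M + 1) ≤ (∑ j ∈ range (M + 1), d j) * c M :=
      mul_le_mul_of_nonpos_left (hc (Nat.le_succ M)) (hd (M + 1))
    nlinarith [ih, h1]

lemma multR_eq_card {n : ℕ} (v : Fin n → ℝ) (s : ℝ) :
    multR v s = (Finset.univ.filter (fun i => v i = s)).card := by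
  rw [multR, ← Set.ncard_coe_finset]
  congr 1
  ext i
  simp

/-- multiplicity of `valE ε j` is `p j`. -/
lemma multR_valE {n : ℕ} {ε : ℝ} {p : ℕ → ℕ} {w : Fin n → ℝ}
    (hw : IsVEps n ε p w) (j : ℕ) : multR w (valE ε j) = p j := by
  rcases Nat.eq_zero_or_pos j with rfl | hj
  · rw [valE_zero]; exact hw.2.2.1
  · set k := (j + 1) / 2 with hkdef
    have hk : 1 ≤ k := by omega
    rcases Nat.mod_two_eq_zero_or_one j with hpar | hpar
    · have hjk : j = 2 * k := by omega
      rcases le_or_gt 0 ε with hε | hε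
      · rw [hjk, valE_even_pos hε hk]; exact ((hw.2.2.2 k hk).1 hε).2
      · rw [hjk, valE_even_neg hε hk]; exact ((hw.2.2.2 k hk).2 hε).2
    · have hjk : j = 2 * k - 1 := by omega
      rcases le_or_gt 0 ε with hε | hε
      · rw [hjk, valE_odd_pos hε hk]; exact ((hw.2.2.2 k hk).1 hε).1
      · rw [hjk, valE_odd_neg hε hk]; exact ((hw.2.2.2 k hk).2 hε).1

/-- every entry of w is some `valE ε j`. -/
lemma exists_valE {n : ℕ} {ε : ℝ} {p : ℕ → ℕ} {w : Fin n → ℝ}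
    (hw : IsVEps n ε p w) (i : Fin n) : ∃ j, w i = valE ε j := by
  obtain ⟨m, hm⟩ := hw.2.1 i
  rcases lt_trichotomy m 0 with hm0 | rfl | hm0
  · set k := (-m).toNat with hkdef
    have hk : 1 ≤ k := by omega
    have hmk : (m : ℝ) = -(k : ℝ) := by
      have : (m : ℤ) = -(k : ℤ) := by omega
      exact_mod_cast this
    rcases le_or_gt 0 ε with hε | hε
    · exact ⟨2 * k - 1, by rw [hm, valE_odd_pos hε hk, hmk]; ring⟩
    · exact ⟨2 * k, by rw [hm, valE_even_neg hε hk, hmk]; ring⟩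
  · exact ⟨0, by rw [hm, valE_zero]; norm_num⟩
  · set k := m.toNat with hkdef
    have hk : 1 ≤ k := by omega
    have hmk : (m : ℝ) = (k : ℝ) := by
      have : (m : ℤ) = (k : ℤ) := by omega
      exact_mod_cast this
    rcases le_or_gt 0 ε with hε | hε
    · exact ⟨2 * k, by rw [hm, valE_even_pos hε hk, hmk]⟩
    · exact ⟨2 * k - 1, by rw [hm, valE_odd_neg hε hk, hmk]⟩

/-- every entry of w is some `valE ε j` with `j < 2n`. -/
lemma exists_valE_lt {n : ℕ} (hn : 1 ≤ n) {ε : ℝ} {p : ℕ → ℕ} {w : Fin n → ℝ}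
    (hw : IsVEps n ε p w) (hsupp : ∀ i, n ≤ i → p i = 0) (i : Fin n) :
    ∃ j < 2 * n, w i = valE ε j := by
  obtain ⟨j, hj⟩ := exists_valE hw i
  refine ⟨j, ?_, hj⟩
  by_contra hjn
  push_neg at hjn
  have h0 : multR w (valE ε j) = 0 := by
    rw [multR_valE hw j]
    exact hsupp j (by omega)
  have hpos : 0 < multR w (valE ε j) := by
    rw [multR]
    rw [Set.ncard_pos (Set.toFinite _)]
    exact ⟨i, hj⟩
  omega

lemma sum_sq_eq {n : ℕ} (hn : 1 ≤ n) {ε : ℝ} {p : ℕ → ℕ} {w : Fin n → ℝ}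
    (hw : IsVEps n ε p w) (hsupp : ∀ i, n ≤ i → p i = 0) :
    ∑ i, (w i) ^ 2 = ∑ j ∈ range (2 * n), (p j : ℝ) * (valE ε j) ^ 2 := by
  have hcover : (Finset.univ : Finset (Fin n)) =
      (range (2 * n)).biUnion (fun j => Finset.univ.filter (fun i => w i = valE ε j)) := by
    ext i
    simp only [mem_univ, mem_biUnion, mem_range, mem_filter, true_and, true_iff]
    exact exists_valE_lt hn hw hsupp i
  have hdisj : ∀ j ∈ range (2 * n), ∀ j' ∈ range (2 * n), j ≠ j' →
      Disjoint (Finset.univ.filter (fun i => w i = valE ε j))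
        (Finset.univ.filter (fun i => w i = valE ε j')) := by
    intro j _ j' _ hne
    rw [Finset.disjoint_left]
    intro i hi hi'
    simp only [mem_filter, mem_univ, true_and] at hi hi'
    exact hne (valE_inj ε (hi ▸ hi'))
  calc ∑ i, (w i) ^ 2
      = ∑ i ∈ (range (2 * n)).biUnion
          (fun j => Finset.univ.filter (fun i => w i = valE ε j)), (w i) ^ 2 := by rw [← hcover]
    _ = ∑ j ∈ range (2 * n), ∑ i ∈ Finset.univ.filter (fun i => w i = valE ε j), (w i) ^ 2 :=
        Finset.sum_biUnion hdisj
    _ = ∑ j ∈ range (2 * n), (p j : ℝ) * (valE ε j) ^ 2 := by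
        refine Finset.sum_congr rfl fun j _ => ?_
        rw [Finset.sum_congr rfl (fun i hi => by
          rw [(Finset.mem_filter.mp hi).2]), Finset.sum_const, nsmul_eq_mul,
          ← multR_eq_card, multR_valE hw j]


/-- For every `ε ∈ (−1/2, 1/2)`, the map `v_ε : 𝒫(n) → (ε+ℤ)ⁿ₊` is
order-reversing: if `p′ ≤ p` in the dominance order then `|v_ε(p)| ≤ |v_ε(p′)|`. -/
theorem statement2 (n : ℕ) (hn : 1 ≤ n) (ε : ℝ)
    (hε₁ : -(1 / 2 : ℝ) < ε) (hε₂ : ε < 1 / 2)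
    (p p' : ℕ → ℕ) (hp : IsPartition n p) (hp' : IsPartition n p')
    (hdom : Dominates p p')
    (w w' : Fin n → ℝ) (hw : IsVEps n ε p w) (hw' : IsVEps n ε p' w') :
    enormR w ≤ enormR w' := by
  have hsum : ∑ i, (w i) ^ 2 = ∑ j ∈ range (2 * n), (p j : ℝ) * (valE ε j) ^ 2 :=
    sum_sq_eq hn hw hp.2.1
  have hsum' : ∑ i, (w' i) ^ 2 = ∑ j ∈ range (2 * n), (p' j : ℝ) * (valE ε j) ^ 2 :=
    sum_sq_eq hn hw' hp'.2.1
  set d := fun j => (p' j : ℝ) - (p j : ℝ) with hd_def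
  have hd : ∀ m, ∑ j ∈ range m, d j ≤ 0 := by
    intro m
    have := hdom m
    have hcast : ((∑ i ∈ range m, p' i : ℕ) : ℝ) ≤ ((∑ i ∈ range m, p i : ℕ) : ℝ) :=
      Nat.cast_le.mpr this
    push_cast at hcast
    simp only [hd_def, Finset.sum_sub_distrib]
    linarith
  -- total sums over range (2n) agree
  have htot : ∀ q : ℕ → ℕ, IsPartition n q → ∑ j ∈ range (2 * n), (q j : ℝ) = n := by
    intro q hq
    have h1 : ∑ j ∈ range (2 * n), q j = ∑ j ∈ range n, q j := by
      symm
      apply Finset.sum_subset (Finset.range_subset_range.mpr (by omega))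
      intro x _ hx
      exact hq.2.1 x (by simpa using hx)
    rw [← Nat.cast_sum, h1, hq.2.2]
  have hDtot : ∑ j ∈ range (2 * n), d j = 0 := by
    simp only [hd_def, Finset.sum_sub_distrib]
    rw [htot p' hp', htot p hp]
    ring
  have hM : 2 * n = (2 * n - 1) + 1 := by omega
  have habel := abel_ineq (fun j => (valE ε j) ^ 2) (valE_sq_mono hε₁ hε₂) d hd (2 * n - 1)
  rw [← hM, hDtot, zero_mul] at habel
  have hle : ∑ i, (w i) ^ 2 ≤ ∑ i, (w' i) ^ 2 := by
    rw [hsum, hsum']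
    have : ∑ j ∈ range (2 * n), d j * (valE ε j) ^ 2 =
        ∑ j ∈ range (2 * n), (p' j : ℝ) * (valE ε j) ^ 2 -
        ∑ j ∈ range (2 * n), (p j : ℝ) * (valE ε j) ^ 2 := by
      rw [← Finset.sum_sub_distrib]
      exact Finset.sum_congr rfl fun j _ => by simp [hd_def]; ring
    linarith [habel, this ▸ habel]
  exact Real.sqrt_le_sqrt hle
end

section
/- Let ε ∈ (−1/2, 1/2) and let v, v′ ∈ (ε+ℤ)ⁿ₊. If v is ε-triangular and |v′| < |v|, then it is not the case that p_ε(v′) ≤ p_ε(v) in the dominance order. -/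
open Finset

/-- `IsPEps n ε v q` says that the partition `q` of `n` is `p_ε(v)`: the weakly decreasing
rearrangement of the multiplicity sequence `[m_v(ε), m_v(ε-1), m_v(ε+1), …]`, i.e. for each
positive value `c`, the number of parts of `q` equal to `c` is the number of `k : ℤ` with
`m_v(ε + k) = c`. -/
def IsPEps (n : ℕ) (ε : ℝ) (v : Fin n → ℝ) (q : ℕ → ℕ) : Prop :=
  IsPartition n q ∧
  ∀ c : ℕ, 1 ≤ c → mult n q c = {k : ℤ | multR v (ε + (k : ℝ)) = c}.ncard

def s3enum (s : ℤ) (j : ℕ) : ℤ :=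
  if j % 2 = 0 then s * ((j : ℤ) / 2) else -(s * (((j : ℤ) + 1) / 2))

def s3enumInv (s : ℤ) (k : ℤ) : ℕ :=
  if 0 ≤ s * k then (2 * (s * k)).toNat else (-(2 * (s * k)) - 1).toNat

lemma s3enum_left (s : ℤ) (hs : s = 1 ∨ s = -1) (j : ℕ) :
    s3enumInv s (s3enum s j) = j := by
  rcases hs with rfl | rfl <;> rcases Nat.even_or_odd j with ⟨m, rfl⟩ | ⟨m, rfl⟩ <;>
    simp only [s3enum, s3enumInv] <;> split_ifs <;> omega

lemma s3enum_right (s : ℤ) (hs : s = 1 ∨ s = -1) (k : ℤ) :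
    s3enum s (s3enumInv s k) = k := by
  rcases hs with rfl | rfl <;> simp only [s3enum, s3enumInv] <;> split_ifs <;> omega

lemma dc_eq_range (A : Finset ℕ) (h : ∀ a ∈ A, ∀ b, b ≤ a → b ∈ A) :
    A = Finset.range A.card := by
  ext j
  simp only [Finset.mem_range]
  constructor
  · intro hj
    have hsub : Finset.range (j + 1) ⊆ A := by
      intro b hb
      exact h j hj b (Nat.lt_succ_iff.mp (Finset.mem_range.mp hb))
    have := Finset.card_le_card hsub
    simpa using this
  · intro hj
    by_contra hjA
    have hsub : A ⊆ Finset.range j := by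
      intro a ha
      simp only [Finset.mem_range]
      by_contra hja
      exact hjA (h a ha j (by omega))
    have := Finset.card_le_card hsub
    simp only [Finset.card_range] at this
    omega

lemma card_filter_le_eq_sum (S : Finset ℕ) (φ : ℕ → ℕ) (n c : ℕ) (hφ : ∀ j ∈ S, φ j ≤ n) :
    (S.filter (fun j => c ≤ φ j)).card
      = ∑ c' ∈ Finset.Icc c n, (S.filter (fun j => φ j = c')).card := by
  simp only [Finset.card_filter]
  rw [Finset.sum_comm]
  refine Finset.sum_congr rfl fun j hj => ?_
  rw [Finset.sum_ite_eq]
  have hmem : (φ j ∈ Finset.Icc c n) ↔ (c ≤ φ j) := by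
    simp only [Finset.mem_Icc]
    exact ⟨fun h => h.1, fun h => ⟨h, hφ j hj⟩⟩
  simp only [hmem]

lemma sum_eq_sum_levels (S : Finset ℕ) (φ : ℕ → ℕ) (n : ℕ) (hφ : ∀ j ∈ S, φ j ≤ n) :
    ∑ j ∈ S, φ j = ∑ c ∈ Finset.Icc 1 n, (S.filter (fun j => c ≤ φ j)).card := by
  simp only [Finset.card_filter]
  rw [Finset.sum_comm]
  refine Finset.sum_congr rfl fun j hj => ?_
  have ht := hφ j hj
  rw [← Finset.card_filter]
  have h1 : (Finset.Icc 1 n).filter (fun c => c ≤ φ j) = Finset.Icc 1 (φ j) := by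
    ext c
    simp only [Finset.mem_filter, Finset.mem_Icc]
    omega
  rw [h1, Nat.card_Icc]
  omega

lemma abel_ineq_s3 (d C : ℕ → ℝ) (hC : ∀ j, C j ≤ C (j + 1))
    (hD : ∀ m, ∑ j ∈ Finset.range m, d j ≤ 0) :
    ∀ m, (∑ j ∈ Finset.range m, d j) * C m ≤ ∑ j ∈ Finset.range m, d j * C j := by
  intro m
  induction m with
  | zero => simp
  | succ m ih =>
    rw [Finset.sum_range_succ, Finset.sum_range_succ]
    have hD1 : ∑ j ∈ Finset.range m, d j + d m ≤ 0 := by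
      rw [← Finset.sum_range_succ]; exact hD (m + 1)
    have h2 := hC m
    have key : (∑ j ∈ Finset.range m, d j + d m) * C (m + 1)
        ≤ (∑ j ∈ Finset.range m, d j + d m) * C m :=
      mul_le_mul_of_nonpos_left h2 hD1
    nlinarith [ih]

lemma sum_ind (n t : ℕ) (ht : t ≤ n) :
    ∑ c ∈ Finset.Icc 1 n, (if c ≤ t then 1 else 0) = t := by
  rw [← Finset.card_filter]
  have h1 : (Finset.Icc 1 n).filter (fun c => c ≤ t) = Finset.Icc 1 t := by
    ext c
    simp only [Finset.mem_filter, Finset.mem_Icc]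
    omega
  rw [h1, Nat.card_Icc]
  omega

lemma antitone_eq (n : ℕ) (p q : ℕ → ℕ) (hp : Antitone p) (hq : Antitone q)
    (hp0 : ∀ i, n ≤ i → p i = 0) (hq0 : ∀ i, n ≤ i → q i = 0)
    (hpn : ∀ j, p j ≤ n) (hqn : ∀ j, q j ≤ n)
    (h : ∀ c, 1 ≤ c → ((Finset.range n).filter (fun i => p i = c)).card
        = ((Finset.range n).filter (fun i => q i = c)).card) :
    ∀ j, p j = q j := by
  have hN : ∀ c, 1 ≤ c → ((Finset.range n).filter (fun j => c ≤ p j)).card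
      = ((Finset.range n).filter (fun j => c ≤ q j)).card := by
    intro c hc
    rw [card_filter_le_eq_sum _ p n c (fun j _ => hpn j),
        card_filter_le_eq_sum _ q n c (fun j _ => hqn j)]
    exact Finset.sum_congr rfl fun c' hc' =>
      h c' (le_trans hc (Finset.mem_Icc.mp hc').1)
  have hiff : ∀ (r : ℕ → ℕ), Antitone r → (∀ i, n ≤ i → r i = 0) → ∀ c, 1 ≤ c → ∀ j,
      (c ≤ r j ↔ j < ((Finset.range n).filter (fun j => c ≤ r j)).card) := by
    intro r hr hr0 c hc j
    have hrange : (Finset.range n).filter (fun j => c ≤ r j)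
        = Finset.range (((Finset.range n).filter (fun j => c ≤ r j)).card) := by
      apply dc_eq_range
      intro a ha b hb
      simp only [Finset.mem_filter, Finset.mem_range] at ha ⊢
      exact ⟨lt_of_le_of_lt hb ha.1, le_trans ha.2 (hr hb)⟩
    constructor
    · intro hcr
      have hjn : j < n := by
        by_contra h'
        have := hr0 j (le_of_not_gt h')
        omega
      have hmem : j ∈ (Finset.range n).filter (fun j => c ≤ r j) := by
        simp only [Finset.mem_filter, Finset.mem_range]
        exact ⟨hjn, hcr⟩
      rw [hrange] at hmem
      simpa using hmem
    · intro hj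
      have hmem : j ∈ Finset.range (((Finset.range n).filter (fun j => c ≤ r j)).card) :=
        Finset.mem_range.mpr hj
      rw [← hrange] at hmem
      exact (Finset.mem_filter.mp hmem).2
  intro j
  have e1 : p j = ∑ c ∈ Finset.Icc 1 n, (if c ≤ p j then 1 else 0) := (sum_ind n _ (hpn j)).symm
  have e2 : q j = ∑ c ∈ Finset.Icc 1 n, (if c ≤ q j then 1 else 0) := (sum_ind n _ (hqn j)).symm
  rw [e1, e2]
  refine Finset.sum_congr rfl fun c hc => ?_
  have hc1 : 1 ≤ c := (Finset.mem_Icc.mp hc).1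
  have i1 := hiff p hp hp0 c hc1 j
  have i2 := hiff q hq hq0 c hc1 j
  rw [if_congr i1 rfl rfl, if_congr i2 rfl rfl, hN c hc1]

/-- Let `ε ∈ (−1/2, 1/2)` and `v, v′ ∈ (ε+ℤ)ⁿ₊`.  If `v` is
`ε`-triangular (i.e. `v = v_ε(p)` for some partition `p` of `n`) and `|v′| < |v|`, then
`p_ε(v′) ≰ p_ε(v)` in the dominance order. -/
theorem statement3 (n : ℕ) (hn : 1 ≤ n) (ε : ℝ)
    (hε₁ : -(1 / 2 : ℝ) < ε) (hε₂ : ε < 1 / 2)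
    (v v' : Fin n → ℝ)
    (hv : Antitone v) (hvmem : ∀ i, ∃ k : ℤ, v i = ε + (k : ℝ))
    (hv' : Antitone v') (hvmem' : ∀ i, ∃ k : ℤ, v' i = ε + (k : ℝ))
    (htri : ∃ p : ℕ → ℕ, IsPartition n p ∧ IsVEps n ε p v)
    (hlt : enormR v' < enormR v)
    (q q' : ℕ → ℕ) (hq : IsPEps n ε v q) (hq' : IsPEps n ε v' q') :
    ¬ Dominates q q' := by
  classical
  intro hdom
  obtain ⟨p, ⟨hpA, hp0, hpsum⟩, hVA, hVm, hV0, hVk⟩ := htri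
  obtain ⟨⟨hqA, hq0, hqsum⟩, hqmult⟩ := hq
  obtain ⟨⟨hq'A, hq'0, hq'sum⟩, hq'mult⟩ := hq'
  -- sign
  set s : ℤ := if 0 ≤ ε then 1 else -1 with hs_def
  have hs : s = 1 ∨ s = -1 := by
    rw [hs_def]; split_ifs <;> simp
  have hcase : (0 ≤ ε ∧ s = 1) ∨ (ε < 0 ∧ s = -1) := by
    rw [hs_def]
    rcases le_or_gt 0 ε with h | h
    · left; exact ⟨h, if_pos h⟩
    · right; exact ⟨h, if_neg (not_le.mpr h)⟩
  have hts0 : 0 ≤ ε * (s : ℝ) := by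
    rcases hcase with ⟨h1, h2⟩ | ⟨h1, h2⟩ <;> rw [h2] <;> push_cast <;> nlinarith
  have hts1 : 2 * (ε * (s : ℝ)) ≤ 1 := by
    rcases hcase with ⟨h1, h2⟩ | ⟨h1, h2⟩ <;> rw [h2] <;> push_cast <;> nlinarith
  have hss : ((s : ℝ)) * (s : ℝ) = 1 := by
    rcases hs with h | h <;> rw [h] <;> norm_num
  -- enumeration formulas
  have henum0 : s3enum s 0 = 0 := by simp [s3enum]
  have henum_even : ∀ m : ℕ, s3enum s (m + m) = s * m := by
    intro m
    rw [s3enum, if_pos (by omega)]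
    congr 1
    omega
  have henum_odd : ∀ m : ℕ, s3enum s (2 * m + 1) = -(s * ((m : ℤ) + 1)) := by
    intro m
    rw [s3enum, if_neg (by omega)]
    congr 2
    omega
  -- cost function
  set C : ℕ → ℝ := fun j => (ε + ((s3enum s j : ℤ) : ℝ)) ^ 2 with hC_def
  have hCmono : ∀ j, C j ≤ C (j + 1) := by
    intro j
    rcases Nat.even_or_odd j with ⟨m, rfl⟩ | ⟨m, rfl⟩
    · have h1 : s3enum s (m + m) = s * m := henum_even m
      have h2 : s3enum s (m + m + 1) = -(s * ((m : ℤ) + 1)) := by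
        rw [show m + m + 1 = 2 * m + 1 by omega]; exact henum_odd m
      rw [hC_def]
      simp only [h1, h2]
      push_cast
      have hm : (0 : ℝ) ≤ (m : ℝ) := Nat.cast_nonneg m
      have expand : (ε + -((s : ℝ) * ((m : ℝ) + 1))) ^ 2 - (ε + (s : ℝ) * (m : ℝ)) ^ 2
          = (2 * (m : ℝ) + 1) * ((s : ℝ) * (s : ℝ)) - 2 * (ε * (s : ℝ)) * (2 * (m : ℝ) + 1) := by
        ring
      nlinarith [mul_nonneg hm (by linarith : (0:ℝ) ≤ 1 - 2 * (ε * (s:ℝ)))]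
    · have h1 : s3enum s (2 * m + 1) = -(s * ((m : ℤ) + 1)) := henum_odd m
      have h2 : s3enum s (2 * m + 1 + 1) = s * ((m : ℤ) + 1) := by
        rw [show 2 * m + 1 + 1 = (m + 1) + (m + 1) by omega]
        rw [henum_even (m + 1)]
        push_cast
        ring
      rw [hC_def]
      simp only [h1, h2]
      push_cast
      have hm : (0 : ℝ) ≤ (m : ℝ) + 1 := by positivity
      nlinarith [mul_nonneg hts0 hm]
  -- indices
  choose kf hkf using hvmem
  choose kf' hkf' using hvmem'
  set J : ℕ := n ⊔ ((Finset.univ.sup (fun i => s3enumInv s (kf i)) + 1)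
      ⊔ (Finset.univ.sup (fun i => s3enumInv s (kf' i)) + 1)) with hJ_def
  have hJn : n ≤ J := le_max_left _ _
  have hJi : ∀ i, s3enumInv s (kf i) < J := by
    intro i
    have h1 : s3enumInv s (kf i) ≤ Finset.univ.sup (fun i => s3enumInv s (kf i)) :=
      Finset.le_sup (f := fun i => s3enumInv s (kf i)) (Finset.mem_univ i)
    have h2 : Finset.univ.sup (fun i => s3enumInv s (kf i)) + 1 ≤ J :=
      le_trans (le_max_left _ _) (le_max_right _ _)
    omega
  have hJi' : ∀ i, s3enumInv s (kf' i) < J := by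
    intro i
    have h1 : s3enumInv s (kf' i) ≤ Finset.univ.sup (fun i => s3enumInv s (kf' i)) :=
      Finset.le_sup (f := fun i => s3enumInv s (kf' i)) (Finset.mem_univ i)
    have h2 : Finset.univ.sup (fun i => s3enumInv s (kf' i)) + 1 ≤ J :=
      le_trans (le_max_right _ _) (le_max_right _ _)
    omega
  -- fiber claims
  have claimA : ∀ (w : Fin n → ℝ) (kw : Fin n → ℤ), (∀ i, w i = ε + (kw i : ℝ)) →
      ∀ j : ℕ, multR w (ε + ((s3enum s j : ℤ) : ℝ))
        = (Finset.univ.filter (fun i => s3enumInv s (kw i) = j)).card := by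
    intro w kw hkw j
    have hiff : ∀ i : Fin n, w i = ε + ((s3enum s j : ℤ) : ℝ) ↔ s3enumInv s (kw i) = j := by
      intro i
      rw [hkw i]
      constructor
      · intro h
        have h2 : (kw i : ℝ) = ((s3enum s j : ℤ) : ℝ) := by linarith
        have h3 : kw i = s3enum s j := by exact_mod_cast h2
        rw [h3, s3enum_left s hs]
      · intro h
        have h3 : kw i = s3enum s j := by rw [← h, s3enum_right s hs]
        rw [h3]
    unfold multR
    have hset : {i : Fin n | w i = ε + ((s3enum s j : ℤ) : ℝ)}
        = ↑(Finset.univ.filter (fun i => s3enumInv s (kw i) = j)) := by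
      ext i
      simp only [Set.mem_setOf_eq, Finset.coe_filter, Finset.mem_univ, true_and]
      exact hiff i
    rw [hset, Set.ncard_coe_finset]
  have claimB : ∀ (w : Fin n → ℝ) (kw : Fin n → ℤ), (∀ i, w i = ε + (kw i : ℝ)) →
      (∀ i, s3enumInv s (kw i) < J) → ∀ F : ℝ → ℝ,
      ∑ j ∈ Finset.range J,
          (multR w (ε + ((s3enum s j : ℤ) : ℝ)) : ℝ) * F (ε + ((s3enum s j : ℤ) : ℝ))
        = ∑ i, F (w i) := by
    intro w kw hkw hJw F
    rw [← Finset.sum_fiberwise_of_maps_to (g := fun i => s3enumInv s (kw i))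
        (t := Finset.range J) (fun i _ => Finset.mem_range.mpr (hJw i)) (fun i => F (w i))]
    refine Finset.sum_congr rfl fun j hj => ?_
    have hconst : ∀ i ∈ Finset.univ.filter (fun i => s3enumInv s (kw i) = j),
        F (w i) = F (ε + ((s3enum s j : ℤ) : ℝ)) := by
      intro i hi
      rw [Finset.mem_filter] at hi
      have hk : kw i = s3enum s j := by rw [← hi.2, s3enum_right s hs]
      rw [hkw i, hk]
    rw [Finset.sum_congr rfl hconst, Finset.sum_const, nsmul_eq_mul, claimA w kw hkw j]
  have claimC : ∀ (w : Fin n → ℝ) (kw : Fin n → ℤ), (∀ i, w i = ε + (kw i : ℝ)) →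
      (∀ i, s3enumInv s (kw i) < J) → ∀ j, J ≤ j →
      multR w (ε + ((s3enum s j : ℤ) : ℝ)) = 0 := by
    intro w kw hkw hJw j hj
    rw [claimA w kw hkw j, Finset.card_eq_zero, Finset.filter_eq_empty_iff]
    intro i _
    have := hJw i
    omega
  have claimD : ∀ (w : Fin n → ℝ) (kw : Fin n → ℤ), (∀ i, w i = ε + (kw i : ℝ)) →
      (∀ i, s3enumInv s (kw i) < J) →
      ∑ j ∈ Finset.range J, multR w (ε + ((s3enum s j : ℤ) : ℝ)) = n := by
    intro w kw hkw hJw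
    calc ∑ j ∈ Finset.range J, multR w (ε + ((s3enum s j : ℤ) : ℝ))
        = ∑ j ∈ Finset.range J, (Finset.univ.filter (fun i => s3enumInv s (kw i) = j)).card :=
          Finset.sum_congr rfl fun j _ => claimA w kw hkw j
      _ = (Finset.univ : Finset (Fin n)).card :=
          (Finset.card_eq_sum_card_fiberwise (fun i _ => Finset.mem_range.mpr (hJw i))).symm
      _ = n := by simp
  have claimE : ∀ (w : Fin n → ℝ) (kw : Fin n → ℤ), (∀ i, w i = ε + (kw i : ℝ)) →
      (∀ i, s3enumInv s (kw i) < J) → ∀ c : ℕ, 1 ≤ c →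
      {k : ℤ | multR w (ε + (k : ℝ)) = c}.ncard
        = ((Finset.range J).filter (fun j => multR w (ε + ((s3enum s j : ℤ) : ℝ)) = c)).card := by
    intro w kw hkw hJw c hc
    have einj : Function.Injective (s3enum s) :=
      Function.LeftInverse.injective (s3enum_left s hs)
    have himg : {k : ℤ | multR w (ε + (k : ℝ)) = c}
        = (s3enum s) '' ↑((Finset.range J).filter
            (fun j => multR w (ε + ((s3enum s j : ℤ) : ℝ)) = c)) := by
      ext k
      simp only [Set.mem_setOf_eq, Set.mem_image, Finset.mem_coe, Finset.mem_filter,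
        Finset.mem_range]
      constructor
      · intro hk
        refine ⟨s3enumInv s k, ⟨?_, ?_⟩, s3enum_right s hs k⟩
        · by_contra h'
          have := claimC w kw hkw hJw (s3enumInv s k) (le_of_not_gt h')
          rw [s3enum_right s hs k] at this
          omega
        · rw [s3enum_right s hs k]
          exact hk
      · rintro ⟨j, ⟨_, hjc⟩, rfl⟩
        exact hjc
    rw [himg, Set.ncard_image_of_injective _ einj, Set.ncard_coe_finset]
  -- multiplicities of the triangular tuple
  have hfp : ∀ j, multR v (ε + ((s3enum s j : ℤ) : ℝ)) = p j := by
    intro j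
    rcases Nat.even_or_odd j with ⟨m, rfl⟩ | ⟨m, rfl⟩
    · rcases Nat.eq_zero_or_pos m with rfl | hm
      · simpa [henum0] using hV0
      · rw [henum_even m]
        rcases hcase with ⟨hε0, hseq⟩ | ⟨hε0, hseq⟩
        · have hmain := ((hVk m hm).1 hε0).2
          have hx : ε + ((s * (m : ℤ) : ℤ) : ℝ) = ε + (m : ℝ) := by
            rw [hseq]; push_cast; ring
          rw [hx, show m + m = 2 * m by omega]
          exact hmain
        · have hmain := ((hVk m hm).2 hε0).2
          have hx : ε + ((s * (m : ℤ) : ℤ) : ℝ) = ε - (m : ℝ) := by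
            rw [hseq]; push_cast; ring
          rw [hx, show m + m = 2 * m by omega]
          exact hmain
    · rw [henum_odd m]
      rcases hcase with ⟨hε0, hseq⟩ | ⟨hε0, hseq⟩
      · have hmain := ((hVk (m + 1) (by omega)).1 hε0).1
        have hx : ε + ((-(s * ((m : ℤ) + 1)) : ℤ) : ℝ) = ε - ((m + 1 : ℕ) : ℝ) := by
          rw [hseq]; push_cast; ring
        rw [hx, show 2 * m + 1 = 2 * (m + 1) - 1 by omega]
        exact hmain
      · have hmain := ((hVk (m + 1) (by omega)).2 hε0).1
        have hx : ε + ((-(s * ((m : ℤ) + 1)) : ℤ) : ℝ) = ε + ((m + 1 : ℕ) : ℝ) := by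
          rw [hseq]; push_cast; ring
        rw [hx, show 2 * m + 1 = 2 * (m + 1) - 1 by omega]
        exact hmain
  -- bounds
  have hble : ∀ (r : ℕ → ℕ), Antitone r → (∑ i ∈ Finset.range n, r i = n) → ∀ j, r j ≤ n := by
    intro r hr hsum j
    calc r j ≤ r 0 := hr (Nat.zero_le j)
      _ ≤ ∑ i ∈ Finset.range n, r i :=
          Finset.single_le_sum (fun _ _ => Nat.zero_le _) (Finset.mem_range.mpr hn)
      _ = n := hsum
  have hq'len : ∀ j, q' j ≤ n := hble q' hq'A hq'sum
  have hqlen : ∀ j, q j ≤ n := hble q hqA hqsum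
  have hplen : ∀ j, p j ≤ n := hble p hpA hpsum
  have hglen : ∀ j, multR v' (ε + ((s3enum s j : ℤ) : ℝ)) ≤ n := by
    intro j
    rw [claimA v' kf' hkf' j]
    calc (Finset.univ.filter (fun i => s3enumInv s (kf' i) = j)).card
        ≤ (Finset.univ : Finset (Fin n)).card := Finset.card_filter_le _ _
      _ = n := by simp
  -- count matching for v'
  have hcnt' : ∀ c, 1 ≤ c →
      ((Finset.range J).filter (fun j => multR v' (ε + ((s3enum s j : ℤ) : ℝ)) = c)).card
        = ((Finset.range J).filter (fun j => q' j = c)).card := by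
    intro c hc
    rw [← claimE v' kf' hkf' hJi' c hc, ← hq'mult c hc]
    have hfil : (Finset.range J).filter (fun j => q' j = c)
        = (Finset.range n).filter (fun j => q' j = c) := by
      ext j
      simp only [Finset.mem_filter, Finset.mem_range]
      constructor
      · rintro ⟨hjJ, hjc⟩
        refine ⟨?_, hjc⟩
        by_contra h'
        rw [hq'0 j (le_of_not_gt h')] at hjc
        omega
      · rintro ⟨hjn, hjc⟩
        exact ⟨lt_of_lt_of_le hjn hJn, hjc⟩
    rw [hfil]
    rfl
  -- q = p
  have hcnt : ∀ c, 1 ≤ c → ((Finset.range n).filter (fun i => p i = c)).card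
      = ((Finset.range n).filter (fun i => q i = c)).card := by
    intro c hc
    have h1 : mult n q c = {k : ℤ | multR v (ε + (k : ℝ)) = c}.ncard := hqmult c hc
    rw [claimE v kf hkf hJi c hc] at h1
    have h2 : (Finset.range J).filter (fun j => multR v (ε + ((s3enum s j : ℤ) : ℝ)) = c)
        = (Finset.range J).filter (fun j => p j = c) := by
      apply Finset.filter_congr
      intro j _
      rw [hfp j]
    rw [h2] at h1
    have h3 : (Finset.range J).filter (fun j => p j = c)
        = (Finset.range n).filter (fun j => p j = c) := by
      ext j
      simp only [Finset.mem_filter, Finset.mem_range]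
      constructor
      · rintro ⟨hjJ, hjc⟩
        refine ⟨?_, hjc⟩
        by_contra h'
        rw [hp0 j (le_of_not_gt h')] at hjc
        omega
      · rintro ⟨hjn, hjc⟩
        exact ⟨lt_of_lt_of_le hjn hJn, hjc⟩
    rw [h3] at h1
    have h4 : mult n q c = ((Finset.range n).filter (fun i => q i = c)).card := rfl
    omega
  have hqp : ∀ j, p j = q j :=
    antitone_eq n p q hpA hqA hp0 hq0 hplen hqlen hcnt
  -- step 2: partial sums
  have hstep2 : ∀ m, m ≤ J →
      ∑ j ∈ Finset.range m, multR v' (ε + ((s3enum s j : ℤ) : ℝ))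
        ≤ ∑ j ∈ Finset.range m, q' j := by
    intro m hm
    rw [sum_eq_sum_levels (Finset.range m) _ n (fun j _ => hglen j),
        sum_eq_sum_levels (Finset.range m) q' n (fun j _ => hq'len j)]
    refine Finset.sum_le_sum fun c hc => ?_
    have hc1 : 1 ≤ c := (Finset.mem_Icc.mp hc).1
    have hNeq : ((Finset.range J).filter
          (fun j => c ≤ multR v' (ε + ((s3enum s j : ℤ) : ℝ)))).card
        = ((Finset.range J).filter (fun j => c ≤ q' j)).card := by
      rw [card_filter_le_eq_sum _ _ n c (fun j _ => hglen j),
          card_filter_le_eq_sum _ q' n c (fun j _ => hq'len j)]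
      exact Finset.sum_congr rfl fun c' hc' =>
        hcnt' c' (le_trans hc1 (Finset.mem_Icc.mp hc').1)
    have hdc : (Finset.range J).filter (fun j => c ≤ q' j)
        = Finset.range (((Finset.range J).filter (fun j => c ≤ q' j)).card) := by
      apply dc_eq_range
      intro a ha b hb
      simp only [Finset.mem_filter, Finset.mem_range] at ha ⊢
      exact ⟨lt_of_le_of_lt hb ha.1, le_trans ha.2 (hq'A hb)⟩
    set N := ((Finset.range J).filter (fun j => c ≤ q' j)).card with hN_def
    have hfm : (Finset.range m).filter (fun j => c ≤ q' j) = Finset.range (min N m) := by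
      ext j
      simp only [Finset.mem_filter, Finset.mem_range, lt_min_iff]
      constructor
      · rintro ⟨hjm, hjc⟩
        have hjJ : j ∈ (Finset.range J).filter (fun j => c ≤ q' j) :=
          Finset.mem_filter.mpr ⟨Finset.mem_range.mpr (lt_of_lt_of_le hjm hm), hjc⟩
        rw [hdc] at hjJ
        exact ⟨Finset.mem_range.mp hjJ, hjm⟩
      · rintro ⟨hjN, hjm⟩
        refine ⟨hjm, ?_⟩
        have hmem : j ∈ Finset.range N := Finset.mem_range.mpr hjN
        rw [← hdc] at hmem
        exact (Finset.mem_filter.mp hmem).2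
    rw [hfm, Finset.card_range]
    apply le_min
    · rw [← hNeq]
      apply Finset.card_le_card
      apply Finset.filter_subset_filter
      intro x hx
      exact Finset.mem_range.mpr (lt_of_lt_of_le (Finset.mem_range.mp hx) hm)
    · exact le_trans (Finset.card_filter_le _ _) (le_of_eq (Finset.card_range m))
  -- totals
  have hgtot : ∑ j ∈ Finset.range J, multR v' (ε + ((s3enum s j : ℤ) : ℝ)) = n :=
    claimD v' kf' hkf' hJi'
  have hqJtot : ∑ j ∈ Finset.range J, q j = n := by
    rw [← hqsum]
    symm
    apply Finset.sum_subset (Finset.range_subset_range.mpr hJn)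
    intro x _ hx
    exact hq0 x (le_of_not_gt (fun h => hx (Finset.mem_range.mpr h)))
  -- hD for all m
  have hD : ∀ m, ∑ j ∈ Finset.range m, multR v' (ε + ((s3enum s j : ℤ) : ℝ))
      ≤ ∑ j ∈ Finset.range m, q j := by
    intro m
    rcases le_or_gt m J with hm | hm
    · exact le_trans (hstep2 m hm) (hdom m)
    · have h1 : ∑ j ∈ Finset.range m, multR v' (ε + ((s3enum s j : ℤ) : ℝ))
          = ∑ j ∈ Finset.range J, multR v' (ε + ((s3enum s j : ℤ) : ℝ)) := by
        symm
        apply Finset.sum_subset (Finset.range_subset_range.mpr hm.le)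
        intro x _ hx
        exact claimC v' kf' hkf' hJi' x (le_of_not_gt (fun h => hx (Finset.mem_range.mpr h)))
      have h2 : ∑ j ∈ Finset.range n, q j ≤ ∑ j ∈ Finset.range m, q j :=
        Finset.sum_le_sum_of_subset (Finset.range_subset_range.mpr (le_trans hJn hm.le))
      omega
  -- Abel
  have habel := abel_ineq_s3
    (fun j => (multR v' (ε + ((s3enum s j : ℤ) : ℝ)) : ℝ) - (q j : ℝ)) C hCmono
    (fun m => by
      rw [Finset.sum_sub_distrib]
      have := hD m
      have hcast : (∑ j ∈ Finset.range m, (multR v' (ε + ((s3enum s j : ℤ) : ℝ)) : ℝ))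
          ≤ ∑ j ∈ Finset.range m, (q j : ℝ) := by
        push_cast
        exact_mod_cast this
      linarith) J
  have hDJ : ∑ j ∈ Finset.range J,
      ((multR v' (ε + ((s3enum s j : ℤ) : ℝ)) : ℝ) - (q j : ℝ)) = 0 := by
    rw [Finset.sum_sub_distrib]
    have h1 : (∑ j ∈ Finset.range J, (multR v' (ε + ((s3enum s j : ℤ) : ℝ)) : ℝ)) = n := by
      exact_mod_cast congrArg (Nat.cast : ℕ → ℝ) hgtot
    have h2 : (∑ j ∈ Finset.range J, (q j : ℝ)) = n := by
      exact_mod_cast congrArg (Nat.cast : ℕ → ℝ) hqJtot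
    rw [h1, h2]
    ring
  rw [hDJ, zero_mul] at habel
  have hkey : ∑ j ∈ Finset.range J, (q j : ℝ) * C j
      ≤ ∑ j ∈ Finset.range J, (multR v' (ε + ((s3enum s j : ℤ) : ℝ)) : ℝ) * C j := by
    have hsplit : ∑ j ∈ Finset.range J,
        ((multR v' (ε + ((s3enum s j : ℤ) : ℝ)) : ℝ) - (q j : ℝ)) * C j
        = ∑ j ∈ Finset.range J, (multR v' (ε + ((s3enum s j : ℤ) : ℝ)) : ℝ) * C j
          - ∑ j ∈ Finset.range J, (q j : ℝ) * C j := by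
      rw [← Finset.sum_sub_distrib]
      exact Finset.sum_congr rfl fun j _ => by ring
    rw [hsplit] at habel
    linarith
  -- norms
  have hv'norm : ∑ j ∈ Finset.range J, (multR v' (ε + ((s3enum s j : ℤ) : ℝ)) : ℝ) * C j
      = ∑ i, (v' i) ^ 2 := claimB v' kf' hkf' hJi' (fun x => x ^ 2)
  have hvnorm : ∑ j ∈ Finset.range J, (q j : ℝ) * C j = ∑ i, (v i) ^ 2 := by
    have h1 : ∑ j ∈ Finset.range J, (q j : ℝ) * C j
        = ∑ j ∈ Finset.range J, (multR v (ε + ((s3enum s j : ℤ) : ℝ)) : ℝ) * C j := by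
      refine Finset.sum_congr rfl fun j _ => ?_
      rw [hfp j, hqp j]
    rw [h1]
    exact claimB v kf hkf hJi (fun x => x ^ 2)
  have hsum_le : ∑ i, (v i) ^ 2 ≤ ∑ i, (v' i) ^ 2 := by
    rw [← hvnorm, ← hv'norm]
    exact hkey
  have hfinal : enormR v ≤ enormR v' := by
    unfold enormR
    exact Real.sqrt_le_sqrt hsum_le
  exact absurd hlt (not_lt.mpr hfinal)
end

section
/- Suppose p ∈ 𝒫**(2n), p′ ∈ 𝒫*(2n), and p′ ≤ p in the dominance order. Then |v_ℤ(p)| ≤ |v_ℤ(p′)|. -/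
open Finset

/-- Multiplicity of the value `k` among the entries of a tuple of naturals. -/
def multN {n : ℕ} (v : Fin n → ℕ) (k : ℕ) : ℕ :=
  (Finset.univ.filter (fun i => v i = k)).card

/-- Euclidean norm of a tuple of naturals. -/
noncomputable def enormN {n : ℕ} (v : Fin n → ℕ) : ℝ :=
  Real.sqrt (∑ i, ((v i : ℝ)) ^ 2)

/-- `IsPStar n p μ₀ μ` says that `p ∈ 𝒫*(2n)` with decomposition data `(μ₀; μ₁, μ₂, …)`:
`p` is a partition of `2n` whose multiset of parts is the union of the doubled partition
`[μ₁, μ₁, μ₂, μ₂, …]` and a single even part `2μ₀` (omitted if `μ₀ = 0`).  Equivalently,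
for each `k ≥ 1` the multiplicity of `k` in `p` equals twice its multiplicity in `μ`, plus
one if `k = 2μ₀`. -/
def IsPStar (n : ℕ) (p : ℕ → ℕ) (μ₀ : ℕ) (μ : ℕ → ℕ) : Prop :=
  IsPartition (2 * n) p ∧ Antitone μ ∧ (∀ i, n ≤ i → μ i = 0) ∧
  ∀ k, 1 ≤ k → mult (2 * n) p k = 2 * mult n μ k + (if k = 2 * μ₀ then 1 else 0)

/-- `IsVZ n μ₀ μ w` says that the weakly decreasing tuple `w : Fin n → ℕ` is `v_ℤ(p)` for
`p ∈ 𝒫*(2n)` with decomposition data `(μ₀; μ₁, μ₂, …)`: it has `μ₀` entries equal to `0`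
and `μ_k` entries equal to `k` for each `k ≥ 1`. -/
def IsVZ (n : ℕ) (μ₀ : ℕ) (μ : ℕ → ℕ) (w : Fin n → ℕ) : Prop :=
  Antitone w ∧ multN w 0 = μ₀ ∧ ∀ k, 1 ≤ k → multN w k = μ (k - 1)


/-- Sum of squares `1² + 2² + ⋯ + m²`. -/
def fsq (m : ℕ) : ℕ := ∑ k ∈ Finset.range m, (k + 1) ^ 2

lemma sum_ite_lt (c m : ℕ) :
    (∑ j ∈ Finset.range m, (if j < c then 1 else 0)) = min c m := by
  induction m with
  | zero => simp
  | succ m ih => rw [Finset.sum_range_succ, ih]; split <;> omega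

/-- The set of indices where an antitone function exceeds `m` is an initial segment. -/
lemma downset_filter (q : ℕ → ℕ) (hq : Antitone q) (M m : ℕ) :
    (Finset.range M).filter (fun i => m < q i)
      = Finset.range (((Finset.range M).filter (fun i => m < q i)).card) := by
  set s := (Finset.range M).filter (fun i => m < q i) with hs
  ext i
  constructor
  · intro hi
    rw [Finset.mem_range]
    have hsub : Finset.range (i + 1) ⊆ s := by
      intro l hl
      rw [Finset.mem_range] at hl
      have hli : l ≤ i := Nat.lt_succ_iff.mp hl
      rw [hs, Finset.mem_filter] at hi ⊢
      rw [Finset.mem_range] at hi ⊢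
      exact ⟨lt_of_le_of_lt hli hi.1, lt_of_lt_of_le hi.2 (hq hli)⟩
    have := Finset.card_le_card hsub
    simpa using this
  · intro hi
    rw [Finset.mem_range] at hi
    by_contra h
    have hsub : s ⊆ Finset.range i := by
      intro k hk
      rw [Finset.mem_range]
      by_contra hk'
      push_neg at hk'
      have hkmem := hk
      rw [hs, Finset.mem_filter, Finset.mem_range] at hkmem
      apply h
      rw [hs, Finset.mem_filter, Finset.mem_range]
      exact ⟨lt_of_le_of_lt hk' hkmem.1, lt_of_lt_of_le hkmem.2 (hq hk')⟩
    have := Finset.card_le_card hsub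
    simp only [Finset.card_range] at this
    omega

lemma group_range (q : ℕ → ℕ) (M B : ℕ) (hB : ∀ i ∈ Finset.range M, q i ∈ Finset.range B)
    (g : ℕ → ℕ) :
    ∑ i ∈ Finset.range M, g (q i) = ∑ t ∈ Finset.range B, (mult M q t) * g t := by
  rw [← Finset.sum_fiberwise_of_maps_to hB (fun i => g (q i))]
  refine Finset.sum_congr rfl (fun t _ => ?_)
  rw [mult]
  rw [Finset.sum_congr rfl (fun i hi => by rw [(Finset.mem_filter.mp hi).2] :
      ∀ i ∈ (Finset.range M).filter (fun i => q i = t), g (q i) = g t)]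
  rw [Finset.sum_const, smul_eq_mul]

lemma group_fin {n : ℕ} (v : Fin n → ℕ) (B : ℕ) (hB : ∀ i, v i < B) (g : ℕ → ℕ) :
    ∑ i, g (v i) = ∑ t ∈ Finset.range B, (multN v t) * g t := by
  rw [← Finset.sum_fiberwise_of_maps_to (fun i _ => Finset.mem_range.mpr (hB i))
      (fun i => g (v i))]
  refine Finset.sum_congr rfl (fun t _ => ?_)
  rw [multN]
  rw [Finset.sum_congr rfl (fun i hi => by rw [(Finset.mem_filter.mp hi).2] :
      ∀ i ∈ Finset.univ.filter (fun i => v i = t), g (v i) = g t)]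
  rw [Finset.sum_const, smul_eq_mul]

lemma abel_aux (d a : ℕ → ℤ) (hmono : ∀ j, a (j + 1) ≤ a j)
    (hd : ∀ m, 0 ≤ ∑ j ∈ Finset.range m, d j) :
    ∀ B, (∑ j ∈ Finset.range B, d j) * a B ≤ ∑ j ∈ Finset.range B, d j * a j := by
  intro B
  induction B with
  | zero => simp
  | succ B ih =>
    have hdB1 : 0 ≤ ∑ j ∈ Finset.range (B + 1), d j := hd (B + 1)
    rw [Finset.sum_range_succ] at hdB1 ⊢
    rw [Finset.sum_range_succ (fun j => d j * a j)]
    calc (∑ j ∈ Finset.range B, d j + d B) * a (B + 1)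
        ≤ (∑ j ∈ Finset.range B, d j + d B) * a B :=
          mul_le_mul_of_nonneg_left (hmono B) hdB1
      _ = (∑ j ∈ Finset.range B, d j) * a B + d B * a B := by ring
      _ ≤ (∑ j ∈ Finset.range B, d j * a j) + d B * a B := by linarith [ih]

lemma fsq_convex (a b : ℕ) :
    ((b : ℤ) - a) * ((a : ℤ) + 1) ^ 2 ≤ (fsq b : ℤ) - fsq a := by
  rcases le_total a b with h | h
  · have heq : fsq a + ∑ k ∈ Finset.Ico a b, (k + 1) ^ 2 = fsq b := by
      simp only [fsq, Finset.range_eq_Ico]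
      exact Finset.sum_Ico_consecutive _ (Nat.zero_le a) h
    have hb : (b - a) * (a + 1) ^ 2 ≤ ∑ k ∈ Finset.Ico a b, (k + 1) ^ 2 := by
      calc (b - a) * (a + 1) ^ 2 = ∑ _k ∈ Finset.Ico a b, (a + 1) ^ 2 := by
            rw [Finset.sum_const, Nat.card_Ico, smul_eq_mul]
        _ ≤ _ := Finset.sum_le_sum (fun k hk =>
            Nat.pow_le_pow_left (by have := (Finset.mem_Ico.mp hk).1; omega) 2)
    have heq' : (fsq a : ℤ) + ((∑ k ∈ Finset.Ico a b, (k + 1) ^ 2 : ℕ) : ℤ) = fsq b := by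
      exact_mod_cast congrArg (Nat.cast : ℕ → ℤ) heq
    zify [h] at hb
    linarith
  · have heq : fsq b + ∑ k ∈ Finset.Ico b a, (k + 1) ^ 2 = fsq a := by
      simp only [fsq, Finset.range_eq_Ico]
      exact Finset.sum_Ico_consecutive _ (Nat.zero_le b) h
    have hb : ∑ k ∈ Finset.Ico b a, (k + 1) ^ 2 ≤ (a - b) * (a + 1) ^ 2 := by
      calc ∑ k ∈ Finset.Ico b a, (k + 1) ^ 2
          ≤ ∑ _k ∈ Finset.Ico b a, (a + 1) ^ 2 := Finset.sum_le_sum (fun k hk =>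
            Nat.pow_le_pow_left (by have := (Finset.mem_Ico.mp hk).2; omega) 2)
        _ = (a - b) * (a + 1) ^ 2 := by rw [Finset.sum_const, Nat.card_Ico, smul_eq_mul]
    have heq' : (fsq b : ℤ) + ((∑ k ∈ Finset.Ico b a, (k + 1) ^ 2 : ℕ) : ℤ) = fsq a := by
      exact_mod_cast congrArg (Nat.cast : ℕ → ℤ) heq
    zify [h] at hb
    linarith

/-- `nu n μ j` is the number of indices `k < n` with `μ k > j` (the conjugate partition). -/
def nu (n : ℕ) (μ : ℕ → ℕ) (j : ℕ) : ℕ := ((Finset.range n).filter (fun k => j < μ k)).card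

lemma nu_antitone (n : ℕ) (ρ : ℕ → ℕ) (j : ℕ) : nu n ρ (j + 1) ≤ nu n ρ j := by
  apply Finset.card_le_card
  intro k hk
  rw [Finset.mem_filter] at hk ⊢
  exact ⟨hk.1, by omega⟩

/-- If `p ∈ 𝒫**(2n)`, `p′ ∈ 𝒫*(2n)` and `p′ ≤ p` in the dominance
order, then `|v_ℤ(p)| ≤ |v_ℤ(p′)|`. -/
theorem statement4 (n : ℕ) (hn : 1 ≤ n)
    (p p' : ℕ → ℕ) (μ₀ μ₀' : ℕ) (μ μ' : ℕ → ℕ)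
    (hp : IsPStar n p μ₀ μ) (hpss : μ 0 ≤ 2 * μ₀)
    (hp' : IsPStar n p' μ₀' μ')
    (hdom : Dominates p p')
    (w w' : Fin n → ℕ) (hw : IsVZ n μ₀ μ w) (hw' : IsVZ n μ₀' μ' w') :
    enormN w ≤ enormN w' := by
  obtain ⟨⟨hpant, hpz, hpsum⟩, hμant, hμz, hpm⟩ := hp
  obtain ⟨⟨hpant', hpz', hpsum'⟩, hμant', hμz', hpm'⟩ := hp'
  obtain ⟨hwant, hw0, hwm⟩ := hw
  obtain ⟨hwant', hw0', hwm'⟩ := hw'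
  -- every part is at most 2n
  have hple : ∀ (q : ℕ → ℕ), (∀ i, 2*n ≤ i → q i = 0) →
      (∑ i ∈ Finset.range (2*n), q i = 2*n) → ∀ i, q i ≤ 2*n := by
    intro q hqz hqs i
    by_cases hi : i < 2*n
    · calc q i ≤ ∑ i ∈ Finset.range (2*n), q i :=
          Finset.single_le_sum (fun _ _ => Nat.zero_le _) (Finset.mem_range.mpr hi)
        _ = 2*n := hqs
    · rw [hqz i (le_of_not_gt hi)]; exact Nat.zero_le _
  have hval : ∀ (q : ℕ → ℕ) (t : ℕ), 0 < mult (2*n) q t → ∃ i, i < 2*n ∧ q i = t := by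
    intro q t ht
    obtain ⟨i, hi⟩ := Finset.card_pos.mp ht
    rw [Finset.mem_filter, Finset.mem_range] at hi
    exact ⟨i, hi.1, hi.2⟩
  -- parts of μ, μ' are at most 2n
  have hμleg : ∀ (q : ℕ → ℕ) (ρ₀ : ℕ) (ρ : ℕ → ℕ), (∀ i, 2*n ≤ i → q i = 0) →
      (∑ i ∈ Finset.range (2*n), q i = 2*n) → (∀ i, n ≤ i → ρ i = 0) →
      (∀ k, 1 ≤ k → mult (2*n) q k = 2 * mult n ρ k + (if k = 2*ρ₀ then 1 else 0)) →
      ∀ k, ρ k ≤ 2*n := by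
    intro q ρ₀ ρ hqz hqs hρz hm k
    rcases Nat.eq_zero_or_pos (ρ k) with h0 | h1
    · omega
    · have hk : k < n := by
        by_contra hk; push_neg at hk; rw [hρz k hk] at h1; omega
      have hm1 : 0 < mult n ρ (ρ k) :=
        Finset.card_pos.mpr ⟨k, Finset.mem_filter.mpr ⟨Finset.mem_range.mpr hk, rfl⟩⟩
      have hm2 : 0 < mult (2*n) q (ρ k) := by rw [hm (ρ k) h1]; omega
      obtain ⟨i, _, hieq⟩ := hval q (ρ k) hm2
      rw [← hieq]; exact hple q hqz hqs i
  have hμle : ∀ k, μ k ≤ 2*n := hμleg p μ₀ μ hpz hpsum hμz hpm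
  have hμle' : ∀ k, μ' k ≤ 2*n := hμleg p' μ₀' μ' hpz' hpsum' hμz' hpm'
  -- μ₀, μ₀' ≤ n
  have hμ₀g : ∀ (q : ℕ → ℕ) (ρ₀ : ℕ) (ρ : ℕ → ℕ), (∀ i, 2*n ≤ i → q i = 0) →
      (∑ i ∈ Finset.range (2*n), q i = 2*n) →
      (∀ k, 1 ≤ k → mult (2*n) q k = 2 * mult n ρ k + (if k = 2*ρ₀ then 1 else 0)) →
      ρ₀ ≤ n := by
    intro q ρ₀ ρ hqz hqs hm
    rcases Nat.eq_zero_or_pos ρ₀ with h0 | h1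
    · omega
    · have hm2 : 0 < mult (2*n) q (2*ρ₀) := by rw [hm (2*ρ₀) (by omega)]; simp
      obtain ⟨i, _, hieq⟩ := hval q (2*ρ₀) hm2
      have := hple q hqz hqs i
      omega
  have hμ₀n : μ₀ ≤ n := hμ₀g p μ₀ μ hpz hpsum hpm
  have hμ₀n' : μ₀' ≤ n := hμ₀g p' μ₀' μ' hpz' hpsum' hpm'
  -- μ₀' ≤ μ₀
  have hμ₀le : μ₀' ≤ μ₀ := by
    rcases Nat.eq_zero_or_pos μ₀' with h0 | h1
    · omega
    · have h2 : 0 < mult (2*n) p' (2*μ₀') := by rw [hpm' (2*μ₀') (by omega)]; simp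
      obtain ⟨i, _, hieq⟩ := hval p' (2*μ₀') h2
      have h3 : 2*μ₀' ≤ p' 0 := hieq ▸ hpant' (Nat.zero_le i)
      have h4 : p' 0 ≤ p 0 := by
        have := hdom 1; simpa [Finset.sum_range_one] using this
      have h5 : p 0 ≤ 2*μ₀ := by
        by_contra h5; push_neg at h5
        have hp0 : 1 ≤ p 0 := by omega
        have h6 : 0 < mult (2*n) p (p 0) :=
          Finset.card_pos.mpr ⟨0, Finset.mem_filter.mpr ⟨Finset.mem_range.mpr (by omega), rfl⟩⟩
        rw [hpm (p 0) hp0, if_neg (by omega)] at h6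
        have h8 : 0 < mult n μ (p 0) := by omega
        obtain ⟨k, hk⟩ := Finset.card_pos.mp h8
        rw [Finset.mem_filter, Finset.mem_range] at hk
        have := hμant (Nat.zero_le k)
        omega
      omega
  -- the conjugate-multiplicity formula
  have hcgen : ∀ (q : ℕ → ℕ) (ρ₀ : ℕ) (ρ : ℕ → ℕ), (∀ i, q i ≤ 2*n) → (∀ k, ρ k ≤ 2*n) →
      ρ₀ ≤ n →
      (∀ k, 1 ≤ k → mult (2*n) q k = 2 * mult n ρ k + (if k = 2*ρ₀ then 1 else 0)) →
      ∀ j, (((Finset.range (2*n)).filter (fun i => j < q i)).card)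
          = 2 * nu n ρ j + (if j < 2*ρ₀ then 1 else 0) := by
    intro q ρ₀ ρ hq hρ hρ₀ hm j
    have e1 : (((Finset.range (2*n)).filter (fun i => j < q i)).card)
        = ∑ i ∈ Finset.range (2*n), (if j < q i then 1 else 0) := by
      simp [Finset.sum_boole]
    have e2 : ∑ i ∈ Finset.range (2*n), (if j < q i then 1 else 0)
        = ∑ t ∈ Finset.range (2*n+1), mult (2*n) q t * (if j < t then 1 else 0) :=
      group_range q (2*n) (2*n+1)
        (fun i _ => Finset.mem_range.mpr (by have := hq i; omega))
        (fun t => if j < t then 1 else 0)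
    have e3 : ∑ t ∈ Finset.range (2*n+1), mult (2*n) q t * (if j < t then 1 else 0)
        = ∑ t ∈ Finset.range (2*n+1), (2 * (mult n ρ t * (if j < t then 1 else 0))
            + (if t = 2*ρ₀ then 1 else 0) * (if j < t then 1 else 0)) := by
      refine Finset.sum_congr rfl (fun t _ => ?_)
      rcases Nat.eq_zero_or_pos t with h0 | h1
      · subst h0; simp
      · rw [hm t h1]; ring
    have e4 : ∑ t ∈ Finset.range (2*n+1), (mult n ρ t * (if j < t then 1 else 0)) = nu n ρ j := by
      rw [← group_range ρ n (2*n+1)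
        (fun k _ => Finset.mem_range.mpr (by have := hρ k; omega))
        (fun t => if j < t then 1 else 0)]
      simp [nu, Finset.sum_boole]
    have e5 : ∑ t ∈ Finset.range (2*n+1), (if t = 2*ρ₀ then 1 else 0) * (if j < t then 1 else 0)
        = (if j < 2*ρ₀ then 1 else 0) := by
      rw [Finset.sum_eq_single_of_mem (2*ρ₀) (Finset.mem_range.mpr (by omega))]
      · rw [if_pos rfl, one_mul]
      · intro b _ hb; rw [if_neg hb, zero_mul]
    rw [e1, e2, e3, Finset.sum_add_distrib, ← Finset.mul_sum, e4, e5]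
  have hcp := hcgen p μ₀ μ (hple p hpz hpsum) hμle hμ₀n hpm
  have hcp' := hcgen p' μ₀' μ' (hple p' hpz' hpsum') hμle' hμ₀n' hpm'
  -- partial column sums plus truncated sums equal the total
  have hI1 : ∀ (q : ℕ → ℕ) (m : ℕ),
      (∑ j ∈ Finset.range m, ((Finset.range (2*n)).filter (fun i => j < q i)).card)
        + (∑ i ∈ Finset.range (2*n), (q i - m)) = ∑ i ∈ Finset.range (2*n), q i := by
    intro q m
    have e1 : (∑ j ∈ Finset.range m, ((Finset.range (2*n)).filter (fun i => j < q i)).card)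
        = ∑ i ∈ Finset.range (2*n), min (q i) m := by
      calc (∑ j ∈ Finset.range m, ((Finset.range (2*n)).filter (fun i => j < q i)).card)
          = ∑ j ∈ Finset.range m, ∑ i ∈ Finset.range (2*n), (if j < q i then 1 else 0) :=
            Finset.sum_congr rfl (fun j _ => by simp [Finset.sum_boole])
        _ = ∑ i ∈ Finset.range (2*n), ∑ j ∈ Finset.range m, (if j < q i then 1 else 0) :=
            Finset.sum_comm
        _ = ∑ i ∈ Finset.range (2*n), min (q i) m :=
            Finset.sum_congr rfl (fun i _ => sum_ite_lt (q i) m)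
    rw [e1, ← Finset.sum_add_distrib]
    exact Finset.sum_congr rfl (fun i _ => by omega)
  -- dominance implies the truncated-sum inequality
  have hE : ∀ m, (∑ i ∈ Finset.range (2*n), (p' i - m)) ≤ ∑ i ∈ Finset.range (2*n), (p i - m) := by
    intro m
    set c := ((Finset.range (2*n)).filter (fun i => m < p' i)).card with hcdef
    have hfil : (Finset.range (2*n)).filter (fun i => m < p' i) = Finset.range c :=
      downset_filter p' hpant' (2*n) m
    have hcle : c ≤ 2*n := by
      rw [hcdef]
      exact le_trans (Finset.card_filter_le _ _) (by simp)
    have h1 : ∑ i ∈ Finset.range (2*n), (p' i - m) = ∑ i ∈ Finset.range c, (p' i - m) := by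
      rw [← hfil]
      exact (Finset.sum_filter_of_ne (fun i _ hne => by omega)).symm
    have hmem : ∀ i ∈ Finset.range c, m ≤ p' i := by
      intro i hi
      rw [← hfil, Finset.mem_filter] at hi
      omega
    have h2 : ∑ i ∈ Finset.range c, (p' i - m) + c * m = ∑ i ∈ Finset.range c, p' i := by
      have e : ∑ i ∈ Finset.range c, (p' i - m) + c * m
          = ∑ i ∈ Finset.range c, ((p' i - m) + m) := by
        rw [Finset.sum_add_distrib, Finset.sum_const, Finset.card_range, smul_eq_mul]
      rw [e]
      exact Finset.sum_congr rfl (fun i hi => by have := hmem i hi; omega)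
    have h3 : ∑ i ∈ Finset.range c, p i ≤ ∑ i ∈ Finset.range c, (p i - m) + c * m := by
      have e : ∑ i ∈ Finset.range c, (p i - m) + c * m
          = ∑ i ∈ Finset.range c, ((p i - m) + m) := by
        rw [Finset.sum_add_distrib, Finset.sum_const, Finset.card_range, smul_eq_mul]
      rw [e]
      exact Finset.sum_le_sum (fun i _ => by omega)
    have h4 : ∑ i ∈ Finset.range c, (p i - m) ≤ ∑ i ∈ Finset.range (2*n), (p i - m) :=
      Finset.sum_le_sum_of_subset (Finset.range_subset_range.mpr hcle)
    have h5 := hdom c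
    linarith
  -- the key partial-sum inequality for the conjugates
  have hKL : ∀ m, (∑ j ∈ Finset.range m, nu n μ j) ≤ ∑ j ∈ Finset.range m, nu n μ' j := by
    intro m
    have h1 := hI1 p m
    have h2 := hI1 p' m
    rw [hpsum] at h1
    rw [hpsum'] at h2
    have h3 := hE m
    have h5 : ∑ j ∈ Finset.range m, ((Finset.range (2*n)).filter (fun i => j < p i)).card
        = 2 * (∑ j ∈ Finset.range m, nu n μ j) + min (2*μ₀) m := by
      rw [Finset.mul_sum, ← sum_ite_lt (2*μ₀) m, ← Finset.sum_add_distrib]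
      exact Finset.sum_congr rfl (fun j _ => hcp j)
    have h6 : ∑ j ∈ Finset.range m, ((Finset.range (2*n)).filter (fun i => j < p' i)).card
        = 2 * (∑ j ∈ Finset.range m, nu n μ' j) + min (2*μ₀') m := by
      rw [Finset.mul_sum, ← sum_ite_lt (2*μ₀') m, ← Finset.sum_add_distrib]
      exact Finset.sum_congr rfl (fun j _ => hcp' j)
    have h7 : min (2*μ₀') m ≤ min (2*μ₀) m := by omega
    omega
  -- the squared-norm formula
  have hwsq : ∀ (v : Fin n → ℕ) (ρ : ℕ → ℕ), Antitone ρ → (∀ i, n ≤ i → ρ i = 0) →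
      (∀ k, ρ k ≤ 2*n) → (∀ k, 1 ≤ k → multN v k = ρ (k-1)) →
      ∑ i, (v i)^2 = ∑ j ∈ Finset.range (2*n), fsq (nu n ρ j) := by
    intro v ρ hρa hρz hρle hvm
    have hvb : ∀ i, v i < n + 1 := by
      intro i
      by_contra hb
      push_neg at hb
      have h1 : 0 < multN v (v i) :=
        Finset.card_pos.mpr ⟨i, Finset.mem_filter.mpr ⟨Finset.mem_univ i, rfl⟩⟩
      rw [hvm (v i) (by omega), hρz (v i - 1) (by omega)] at h1
      omega
    have e1 : ∑ i, (v i)^2 = ∑ t ∈ Finset.range (n+1), multN v t * t^2 :=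
      group_fin v (n+1) hvb (fun t => t^2)
    have e2 : ∑ t ∈ Finset.range (n+1), multN v t * t^2
        = ∑ k ∈ Finset.range n, ρ k * (k+1)^2 := by
      rw [Finset.sum_range_succ']
      have e : ∀ k ∈ Finset.range n, multN v (k+1) * (k+1)^2 = ρ k * (k+1)^2 := by
        intro k _
        rw [hvm (k+1) (by omega)]
        norm_num
      rw [Finset.sum_congr rfl e]
      simp
    have e3 : ∀ k ∈ Finset.range n, ρ k * (k+1)^2
        = ∑ j ∈ Finset.range (2*n), (if j < ρ k then 1 else 0) * (k+1)^2 := by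
      intro k _
      rw [← Finset.sum_mul, sum_ite_lt, min_eq_left (hρle k)]
    have e5 : ∀ j, (∑ k ∈ Finset.range n, (if j < ρ k then 1 else 0) * (k+1)^2)
        = fsq (nu n ρ j) := by
      intro j
      calc ∑ k ∈ Finset.range n, (if j < ρ k then 1 else 0) * (k+1)^2
          = ∑ k ∈ Finset.range n, (if j < ρ k then (k+1)^2 else 0) :=
            Finset.sum_congr rfl (fun k _ => boole_mul _ _)
        _ = ∑ k ∈ (Finset.range n).filter (fun k => j < ρ k), (k+1)^2 :=
            (Finset.sum_filter _ _).symm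
        _ = ∑ k ∈ Finset.range (nu n ρ j), (k+1)^2 := by
            rw [show (Finset.range n).filter (fun k => j < ρ k) = Finset.range (nu n ρ j) from
              downset_filter ρ hρa n j]
        _ = fsq (nu n ρ j) := rfl
    rw [e1, e2, Finset.sum_congr rfl e3, Finset.sum_comm]
    exact Finset.sum_congr rfl (fun j _ => e5 j)
  have hwsq1 := hwsq w μ hμant hμz hμle hwm
  have hwsq2 := hwsq w' μ' hμant' hμz' hμle' hwm'
  -- main inequality via Abel summation
  have hmain : (∑ j ∈ Finset.range (2*n), fsq (nu n μ j))
      ≤ ∑ j ∈ Finset.range (2*n), fsq (nu n μ' j) := by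
    have hd : ∀ m, (0:ℤ) ≤ ∑ j ∈ Finset.range m, ((nu n μ' j : ℤ) - nu n μ j) := by
      intro m
      rw [Finset.sum_sub_distrib, sub_nonneg]
      exact_mod_cast hKL m
    have hmono : ∀ j, ((nu n μ (j+1) : ℤ) + 1)^2 ≤ ((nu n μ j : ℤ) + 1)^2 := by
      intro j
      have := nu_antitone n μ j
      have h1 : (nu n μ (j+1) : ℤ) ≤ nu n μ j := by exact_mod_cast this
      apply pow_le_pow_left₀ (by positivity) (by linarith)
    have habel := abel_aux (fun j => (nu n μ' j : ℤ) - nu n μ j)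
      (fun j => ((nu n μ j : ℤ) + 1)^2) hmono hd (2*n)
    have h0 : (0:ℤ) ≤ (∑ j ∈ Finset.range (2*n), ((nu n μ' j : ℤ) - nu n μ j))
        * ((nu n μ (2*n) : ℤ) + 1)^2 := mul_nonneg (hd (2*n)) (by positivity)
    have hptw : ∀ j ∈ Finset.range (2*n),
        ((nu n μ' j : ℤ) - nu n μ j) * ((nu n μ j : ℤ) + 1)^2
          ≤ (fsq (nu n μ' j) : ℤ) - fsq (nu n μ j) :=
      fun j _ => fsq_convex (nu n μ j) (nu n μ' j)
    have h2 := Finset.sum_le_sum hptw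
    rw [Finset.sum_sub_distrib] at h2
    have h3 : ((∑ j ∈ Finset.range (2*n), fsq (nu n μ j) : ℕ) : ℤ)
        ≤ ((∑ j ∈ Finset.range (2*n), fsq (nu n μ' j) : ℕ) : ℤ) := by
      push_cast
      linarith
    exact_mod_cast h3
  -- conclude
  rw [enormN, enormN]
  apply Real.sqrt_le_sqrt
  have hcast : ∀ (v : Fin n → ℕ), (∑ i, ((v i : ℝ))^2) = ((∑ i, (v i)^2 : ℕ) : ℝ) := by
    intro v
    push_cast
    rfl
  rw [hcast w, hcast w']
  have : (∑ i, (w i)^2) ≤ ∑ i, (w' i)^2 := by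
    rw [hwsq1, hwsq2]; exact hmain
  exact_mod_cast this
end

section
/- Suppose p, p′ ∈ 𝒫(n) and p′ ≤ p in the dominance order. Then |v_{1/2}(p)| ≤ |v_{1/2}(p′)|. -/
open Finset

/-- `IsVHalf n p w` says that the weakly decreasing tuple `w : Fin n → ℝ` is the tuple
having `ν_k = p (k-1)` entries equal to `(2k-1)/2` for each `k ≥ 1`, where
`p = [ν₁, ν₂, …]` is a partition of `n`. -/
def IsVHalf (n : ℕ) (p : ℕ → ℕ) (w : Fin n → ℝ) : Prop :=
  Antitone w ∧ (∀ i, ∃ k : ℕ, 1 ≤ k ∧ w i = (2 * (k : ℝ) - 1) / 2) ∧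
  ∀ k : ℕ, 1 ≤ k → multR w ((2 * (k : ℝ) - 1) / 2) = p (k - 1)


lemma vhalf_half_le {n : ℕ} {p : ℕ → ℕ} {w : Fin n → ℝ} (hw : IsVHalf n p w) (i : Fin n) :
    (1:ℝ)/2 ≤ w i := by
  obtain ⟨k, hk, hwi⟩ := hw.2.1 i
  rw [hwi]
  have : (1:ℝ) ≤ k := by exact_mod_cast hk
  linarith

lemma count_lt {n : ℕ} {p : ℕ → ℕ} {w : Fin n → ℝ} (hw : IsVHalf n p w) (k : ℕ) :
    {i : Fin n | w i < (2 * (k:ℝ) + 1) / 2}.ncard = ∑ m ∈ Finset.range k, p m := by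
  induction k with
  | zero =>
    simp only [Finset.range_zero, Finset.sum_empty, Nat.cast_zero]
    convert Set.ncard_empty (Fin n) using 2
    ext i
    simp only [Set.mem_setOf_eq, Set.mem_empty_iff_false, iff_false, not_lt]
    have := vhalf_half_le hw i
    linarith
  | succ k ih =>
    have hsplit : {i : Fin n | w i < (2 * ((k+1:ℕ):ℝ) + 1) / 2}
        = {i : Fin n | w i < (2 * (k:ℝ) + 1) / 2} ∪ {i : Fin n | w i = (2 * (k:ℝ) + 1) / 2} := by
      ext i
      simp only [Set.mem_setOf_eq, Set.mem_union]
      constructor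
      · intro h
        obtain ⟨m, hm1, hwi⟩ := hw.2.1 i
        have hmk : m ≤ k + 1 := by
          by_contra hc
          push_neg at hc
          have : (k:ℝ) + 2 ≤ (m:ℝ) := by exact_mod_cast hc
          rw [hwi] at h
          push_cast at h
          linarith
        rcases Nat.lt_or_ge m (k+1) with hlt | hge
        · left
          have : (m:ℝ) ≤ k := by exact_mod_cast Nat.lt_succ_iff.mp hlt
          rw [hwi]; linarith
        · right
          have hmeq : m = k + 1 := le_antisymm hmk hge
          rw [hwi, hmeq]; push_cast; ring
      · rintro (h | h)
        · push_cast; linarith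
        · rw [h]; push_cast; linarith
    have hdisj : Disjoint {i : Fin n | w i < (2 * (k:ℝ) + 1) / 2}
        {i : Fin n | w i = (2 * (k:ℝ) + 1) / 2} := by
      rw [Set.disjoint_left]
      intro i h1 h2
      simp only [Set.mem_setOf_eq] at h1 h2
      linarith [h2 ▸ h1]
    have hmult : {i : Fin n | w i = (2 * (k:ℝ) + 1) / 2}.ncard = p k := by
      have := hw.2.2 (k+1) (Nat.le_add_left 1 k)
      have heq : (2 * ((k+1:ℕ):ℝ) - 1) / 2 = (2 * (k:ℝ) + 1) / 2 := by push_cast; ring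
      rw [heq] at this
      simpa [multR] using this
    rw [hsplit, Set.ncard_union_eq hdisj (Set.toFinite _) (Set.toFinite _), ih, hmult,
      Finset.sum_range_succ]

/-- If `p, p′ ∈ 𝒫(n)` and `p′ ≤ p` in the dominance order, then
`|v_{1/2}(p)| ≤ |v_{1/2}(p′)|`. -/
theorem statement5 (n : ℕ) (hn : 1 ≤ n)
    (p p' : ℕ → ℕ) (hp : IsPartition n p) (hp' : IsPartition n p')
    (hdom : Dominates p p')
    (w w' : Fin n → ℝ) (hw : IsVHalf n p w) (hw' : IsVHalf n p' w') :
    enormR w ≤ enormR w' := by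
  classical
  have hpt : ∀ i, w i ≤ w' i := by
    intro i
    obtain ⟨k, hk1, hwk⟩ := hw.2.1 i
    obtain ⟨m, hm1, hwm⟩ := hw'.2.1 i
    by_cases hkm : k ≤ m
    · rw [hwk, hwm]
      have : (k:ℝ) ≤ m := by exact_mod_cast hkm
      linarith
    · exfalso
      push_neg at hkm
      obtain ⟨t, rfl⟩ : ∃ t, k = t + 1 := ⟨k - 1, (Nat.succ_pred_eq_of_pos (by omega)).symm⟩
      have hmt : m ≤ t := by omega
      set c : ℝ := (2 * (t:ℝ) + 1) / 2 with hc
      have hA := count_lt hw t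
      have hA' := count_lt hw' t
      have hdomle : ({j : Fin n | w' j < c}).ncard ≤ ({j : Fin n | w j < c}).ncard := by
        rw [hA, hA']; exact hdom t
      have hwic : w i = c := by rw [hwk, hc]; push_cast; ring
      have hAsub : {j : Fin n | w j < c} ⊆ Set.Ioi i := by
        intro j hj
        simp only [Set.mem_setOf_eq] at hj
        by_contra hji
        simp only [Set.mem_Ioi, not_lt] at hji
        have : w i ≤ w j := hw.1 hji
        linarith [hwic ▸ this]
      have hA'sup : Set.Ici i ⊆ {j : Fin n | w' j < c} := by
        intro j hj
        simp only [Set.mem_Ici] at hj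
        have h1 : w' j ≤ w' i := hw'.1 hj
        have h2 : w' i < c := by
          rw [hwm, hc]
          have : (m:ℝ) ≤ t := by exact_mod_cast hmt
          linarith
        exact Set.mem_setOf_eq ▸ lt_of_le_of_lt h1 h2
      have h1 : ({j : Fin n | w j < c}).ncard ≤ (Set.Ioi i).ncard :=
        Set.ncard_le_ncard hAsub (Set.toFinite _)
      have h2 : (Set.Ici i).ncard ≤ ({j : Fin n | w' j < c}).ncard :=
        Set.ncard_le_ncard hA'sup (Set.toFinite _)
      have hIoi : (Set.Ioi i).ncard = n - 1 - (i : ℕ) := by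
        rw [← Finset.coe_Ioi, Set.ncard_coe_finset, Fin.card_Ioi]
      have hIci : (Set.Ici i).ncard = n - (i : ℕ) := by
        rw [← Finset.coe_Ici, Set.ncard_coe_finset, Fin.card_Ici]
      have := i.isLt
      omega
  unfold enormR
  apply Real.sqrt_le_sqrt
  apply Finset.sum_le_sum
  intro i _
  have h0 : (0:ℝ) ≤ w i := le_trans (by norm_num) (vhalf_half_le hw i)
  exact pow_le_pow_left₀ h0 (hpt i) 2
end
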